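/- arXiv:1704.06230 — 4 statements merged into one kernel-verified Lean document; each statement's English description precedes it below -/
import Mathlib

section
/- Under Assumption (A), for any families of weighting vectors v_n, w_n ∈ ℝ^{d_n} with sup_n ‖v_n‖₁ < ∞ and sup_n ‖w_n‖₁ < ∞, there exists a constant C (depending on the weighting vectors only through their ℓ1-norms) such that for all n' = 1, 2, …: sup_{n ∈ ℕ} Σ_{i=1}^∞ Σ_{l=0}^∞ ( f̃_{l,i}^{(n)}(v_n,w_n) − f̃_{l,i+n'}^{(n)}(v_n,w_n) )² ≤ C (n')^{1−θ}. -/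
open MeasureTheory Filter Finset

noncomputable section

/-- The bilinear coefficient functionals `f_{l,j}^{(n)}(v,w)`. -/
def fCoef (d : ℕ → ℕ) (c : ℕ → ℕ → ℕ → ℝ) (n : ℕ) (v w : ℕ → ℝ) (l j : ℕ) : ℝ :=
  if l = 0 then
    ∑ ν ∈ Finset.range (d n), ∑ μ ∈ Finset.range (d n), v ν * w μ * (c n ν j * c n μ j)
  else
    ∑ ν ∈ Finset.range (d n), ∑ μ ∈ Finset.range (d n),
      v ν * w μ * (c n ν j * c n μ (j + l) + c n μ j * c n ν (j + l))

/-- `f̃_{l,i}^{(n)}(v,w) = Σ_{j=i}^∞ f_{l,j}^{(n)}(v,w)`. -/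
def ftil (d : ℕ → ℕ) (c : ℕ → ℕ → ℕ → ℝ) (n : ℕ) (v w : ℕ → ℝ) (l i : ℕ) : ℝ :=
  ∑' j : ℕ, fCoef d c n v w l (i + j)

/-- Assumption (A): `sup_n max_{1≤ν≤d_n} |c_{nj}^{(ν)}|² ≤ C₀ (j ∨ 1)^{−3/2−θ}`. -/
def AssumptionA (d : ℕ → ℕ) (c : ℕ → ℕ → ℕ → ℝ) (θ : ℝ) : Prop :=
  ∃ C₀ > (0 : ℝ), ∀ n j : ℕ, ∀ ν < d n,
    (c n ν j) ^ 2 ≤ C₀ * ((max j 1 : ℕ) : ℝ) ^ (-(3 / 2 : ℝ) - θ)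



/-- Key Bernoulli consequence: `(M/(M+1))^t ≤ 1 - t/(M+1)` for `0 ≤ t ≤ 1`, `0 ≤ M`. -/
lemma frac_rpow_le (t : ℝ) (ht0 : 0 ≤ t) (ht1 : t ≤ 1) (M : ℝ) (hM : 0 ≤ M) :
    (M / (M + 1)) ^ t ≤ 1 - t / (M + 1) := by
  have hM1 : (0:ℝ) < M + 1 := by linarith
  have h1 : M / (M + 1) = 1 + (-(1 / (M + 1))) := by field_simp; ring
  have h2 : (-1 : ℝ) ≤ -(1 / (M + 1)) := by
    have : 1 / (M + 1) ≤ 1 := by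
      rw [div_le_one hM1]; linarith
    linarith
  rw [h1]
  have := rpow_one_add_le_one_add_mul_self h2 ht0 ht1
  calc (1 + -(1 / (M + 1))) ^ t ≤ 1 + t * (-(1 / (M + 1))) := this
    _ = 1 - t / (M + 1) := by ring

/-- Telescoping step for the tail sum: `(s/2) M^{-(1+s)} ≤ M^{-s} - (M+1)^{-s}`. -/
lemma tail_step (s : ℝ) (hs0 : 0 < s) (hs1 : s ≤ 1) (M : ℝ) (hM : 1 ≤ M) :
    (s / 2) * M ^ (-(1 + s)) ≤ M ^ (-s) - (M + 1) ^ (-s) := by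
  have hM0 : (0:ℝ) < M := by linarith
  have hM1 : (0:ℝ) < M + 1 := by linarith
  have hMs : (0:ℝ) < M ^ (-s) := Real.rpow_pos_of_pos hM0 _
  have hkey : (M / (M + 1)) ^ s ≤ 1 - s / (M + 1) :=
    frac_rpow_le s hs0.le hs1 M hM0.le
  have hsplit : (M + 1) ^ (-s) = M ^ (-s) * (M / (M + 1)) ^ s := by
    rw [Real.div_rpow hM0.le hM1.le, Real.rpow_neg hM0.le, Real.rpow_neg hM1.le]
    have h2 : (M:ℝ) ^ s ≠ 0 := (Real.rpow_pos_of_pos hM0 s).ne'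
    field_simp
  have h3 : M ^ (-s) * (s / (M + 1)) ≤ M ^ (-s) - (M + 1) ^ (-s) := by
    rw [hsplit]
    have := mul_le_mul_of_nonneg_left hkey hMs.le
    nlinarith
  have h4 : (s / 2) * M ^ (-(1 + s)) ≤ M ^ (-s) * (s / (M + 1)) := by
    have he : M ^ (-(1 + s)) = M ^ (-1 : ℝ) * M ^ (-s) := by
      rw [← Real.rpow_add hM0]; ring_nf
    rw [he, Real.rpow_neg_one]
    have h5 : s / 2 * M⁻¹ ≤ s / (M + 1) := by
      have he2 : s / 2 * M⁻¹ = s / (2 * M) := by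
        field_simp
      rw [he2, div_le_div_iff₀ (by positivity) hM1]
      nlinarith
    calc (s / 2) * (M⁻¹ * M ^ (-s)) = (s / 2 * M⁻¹) * M ^ (-s) := by ring
      _ ≤ (s / (M + 1)) * M ^ (-s) := mul_le_mul_of_nonneg_right h5 hMs.le
      _ = M ^ (-s) * (s / (M + 1)) := by ring
  linarith

/-- Tail sum estimate: `∑_{m≥i} m^{-(1+s)} ≤ (2/s) i^{-s}` for `i ≥ 1`. -/
lemma tail_sum (s : ℝ) (hs0 : 0 < s) (hs1 : s ≤ 1) (i : ℕ) (hi : 1 ≤ i) :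
    ∑' m : ℕ, ((i + m : ℕ) : ℝ) ^ (-(1 + s)) ≤ (2 / s) * (i : ℝ) ^ (-s) := by
  apply Real.tsum_le_of_sum_range_le
  · intro m; positivity
  · intro N
    have hstep : ∀ m : ℕ, ((i + m : ℕ) : ℝ) ^ (-(1 + s))
        ≤ (2 / s) * (((i + m : ℕ) : ℝ) ^ (-s) - ((i + (m+1) : ℕ) : ℝ) ^ (-s)) := by
      intro m
      have hM : (1:ℝ) ≤ ((i + m : ℕ) : ℝ) := by
        have : 1 ≤ i + m := le_trans hi (Nat.le_add_right i m)
        exact_mod_cast this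
      have := tail_step s hs0 hs1 ((i + m : ℕ) : ℝ) hM
      have hc : ((i + (m+1) : ℕ) : ℝ) = ((i + m : ℕ) : ℝ) + 1 := by push_cast; ring
      rw [hc]
      calc ((i + m : ℕ) : ℝ) ^ (-(1 + s))
          = (2 / s) * ((s / 2) * ((i + m : ℕ) : ℝ) ^ (-(1 + s))) := by
            field_simp
        _ ≤ (2 / s) * (((i + m : ℕ) : ℝ) ^ (-s) - (((i + m : ℕ) : ℝ) + 1) ^ (-s)) := by
            apply mul_le_mul_of_nonneg_left this (by positivity)
    calc ∑ m ∈ range N, ((i + m : ℕ) : ℝ) ^ (-(1 + s))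
        ≤ ∑ m ∈ range N, (2 / s) * (((i + m : ℕ) : ℝ) ^ (-s) - ((i + (m+1) : ℕ) : ℝ) ^ (-s)) :=
          Finset.sum_le_sum fun m _ => hstep m
      _ = (2 / s) * ∑ m ∈ range N, ((fun m : ℕ => ((i + m : ℕ) : ℝ) ^ (-s)) m
            - (fun m : ℕ => ((i + m : ℕ) : ℝ) ^ (-s)) (m + 1)) := by
          rw [Finset.mul_sum]
      _ = (2 / s) * (((i + 0 : ℕ) : ℝ) ^ (-s) - ((i + N : ℕ) : ℝ) ^ (-s)) := by
          rw [sum_range_sub' (fun m : ℕ => ((i + m : ℕ) : ℝ) ^ (-s)) N]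
      _ ≤ (2 / s) * (i : ℝ) ^ (-s) := by
          have h1 : (0:ℝ) ≤ ((i + N : ℕ) : ℝ) ^ (-s) := by positivity
          have h2 : ((i + 0 : ℕ) : ℝ) = (i : ℝ) := by norm_num
          rw [h2]
          have : (0:ℝ) ≤ 2 / s := by positivity
          nlinarith

/-- Partial sum estimate: `∑_{m=1}^{N} m^{-(1-t)} ≤ N^t / t` for `0 < t ≤ 1`. -/
lemma partial_sum (t : ℝ) (ht0 : 0 < t) (ht1 : t ≤ 1) (N : ℕ) :
    ∑ m ∈ range N, ((m + 1 : ℕ) : ℝ) ^ (t - 1) ≤ (N : ℝ) ^ t / t := by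
  have hstep : ∀ m : ℕ, t * ((m + 1 : ℕ) : ℝ) ^ (t - 1)
      ≤ ((m + 1 : ℕ) : ℝ) ^ t - ((m : ℕ) : ℝ) ^ t := by
    intro m
    set M : ℝ := (m : ℝ) with hMdef
    have hM0 : (0:ℝ) ≤ M := Nat.cast_nonneg m
    have hM1 : (0:ℝ) < M + 1 := by linarith
    have hkey : (M / (M + 1)) ^ t ≤ 1 - t / (M + 1) := frac_rpow_le t ht0.le ht1 M hM0
    have hsplit : (M : ℝ) ^ t = (M + 1) ^ t * (M / (M + 1)) ^ t := by
      rw [← Real.mul_rpow (by positivity) (by positivity)]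
      congr 1
      field_simp
    have hMt : (0:ℝ) < (M + 1) ^ t := Real.rpow_pos_of_pos hM1 _
    have h6 : (M:ℝ) ^ t ≤ (M + 1) ^ t - t * (M + 1) ^ (t - 1) := by
      rw [hsplit]
      have h7 := mul_le_mul_of_nonneg_left hkey hMt.le
      have h8 : (M + 1) ^ (t - 1) = (M + 1) ^ t / (M + 1) := by
        rw [Real.rpow_sub hM1, Real.rpow_one]
      rw [h8]
      calc (M + 1) ^ t * (M / (M + 1)) ^ t ≤ (M + 1) ^ t * (1 - t / (M + 1)) := h7
        _ = (M + 1) ^ t - t * ((M + 1) ^ t / (M + 1)) := by ring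
    have hc : ((m + 1 : ℕ) : ℝ) = M + 1 := by push_cast [hMdef]; ring
    rw [hc]
    linarith
  have hsum : t * ∑ m ∈ range N, ((m + 1 : ℕ) : ℝ) ^ (t - 1) ≤ (N : ℝ) ^ t := by
    calc t * ∑ m ∈ range N, ((m + 1 : ℕ) : ℝ) ^ (t - 1)
        = ∑ m ∈ range N, t * ((m + 1 : ℕ) : ℝ) ^ (t - 1) := Finset.mul_sum _ _ _
      _ ≤ ∑ m ∈ range N, (((fun m : ℕ => ((m : ℕ) : ℝ) ^ t) (m + 1)) - ((fun m : ℕ => ((m : ℕ) : ℝ) ^ t) m)) :=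
          Finset.sum_le_sum fun m _ => hstep m
      _ = ((N : ℕ) : ℝ) ^ t - ((0 : ℕ) : ℝ) ^ t := sum_range_sub (fun m : ℕ => ((m : ℕ) : ℝ) ^ t) N
      _ ≤ (N : ℝ) ^ t := by
          simp [Real.zero_rpow ht0.ne']
  rw [le_div_iff₀ ht0]
  nlinarith [hsum]


lemma summable_shift (p : ℝ) (hp : p < -1) (i : ℕ) :
    Summable (fun m : ℕ => ((i + m : ℕ) : ℝ) ^ p) := by
  have h := Real.summable_nat_rpow.mpr hp
  have h2 := (summable_nat_add_iff (f := fun n : ℕ => (n : ℝ) ^ p) i).mpr h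
  simpa [add_comm] using h2

lemma rpow_nat_anti {a b : ℕ} (ha : 1 ≤ a) (hab : a ≤ b) {e : ℝ} (he : e ≤ 0) :
    ((b : ℕ) : ℝ) ^ e ≤ ((a : ℕ) : ℝ) ^ e :=
  Real.rpow_le_rpow_of_nonpos (by exact_mod_cast ha) (by exact_mod_cast hab) he

lemma c_abs_bound (d : ℕ → ℕ) (c : ℕ → ℕ → ℕ → ℝ) (θ : ℝ) (C₀ : ℝ) (hC₀ : 0 < C₀)
    (hc : ∀ n j : ℕ, ∀ ν < d n, (c n ν j) ^ 2 ≤ C₀ * ((max j 1 : ℕ) : ℝ) ^ (-(3 / 2 : ℝ) - θ))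
    (n ν j : ℕ) (hν : ν < d n) (hj : 1 ≤ j) :
    |c n ν j| ≤ Real.sqrt C₀ * (j : ℝ) ^ (-(3 / 4 : ℝ) - θ / 2) := by
  have h := hc n j ν hν
  rw [max_eq_left hj] at h
  have he : ((j : ℝ)) ^ (-(3 / 2 : ℝ) - θ) = ((j : ℝ) ^ (-(3 / 4 : ℝ) - θ / 2)) ^ 2 := by
    rw [← Real.rpow_natCast ((j : ℝ) ^ (-(3 / 4 : ℝ) - θ / 2)) 2,
      ← Real.rpow_mul (Nat.cast_nonneg j)]
    congr 1
    push_cast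
    ring
  rw [he] at h
  have h2 : (c n ν j) ^ 2 ≤ (Real.sqrt C₀ * (j : ℝ) ^ (-(3 / 4 : ℝ) - θ / 2)) ^ 2 := by
    rw [mul_pow, Real.sq_sqrt hC₀.le]
    exact h
  have h3 := Real.sqrt_le_sqrt h2
  rwa [Real.sqrt_sq_eq_abs, Real.sqrt_sq (by positivity)] at h3

lemma cprod_bound (d : ℕ → ℕ) (c : ℕ → ℕ → ℕ → ℝ) (θ : ℝ) (C₀ : ℝ) (hC₀ : 0 < C₀)
    (hc : ∀ n j : ℕ, ∀ ν < d n, (c n ν j) ^ 2 ≤ C₀ * ((max j 1 : ℕ) : ℝ) ^ (-(3 / 2 : ℝ) - θ))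
    (n ν μ j j' : ℕ) (hν : ν < d n) (hμ : μ < d n) (hj : 1 ≤ j) (hj' : 1 ≤ j') :
    |c n ν j * c n μ j'| ≤
      C₀ * ((j : ℝ) ^ (-(3 / 4 : ℝ) - θ / 2) * (j' : ℝ) ^ (-(3 / 4 : ℝ) - θ / 2)) := by
  have h1 := c_abs_bound d c θ C₀ hC₀ hc n ν j hν hj
  have h2 := c_abs_bound d c θ C₀ hC₀ hc n μ j' hμ hj'
  calc |c n ν j * c n μ j'| = |c n ν j| * |c n μ j'| := abs_mul _ _
    _ ≤ (Real.sqrt C₀ * (j : ℝ) ^ (-(3 / 4 : ℝ) - θ / 2)) *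
        (Real.sqrt C₀ * (j' : ℝ) ^ (-(3 / 4 : ℝ) - θ / 2)) :=
      mul_le_mul h1 h2 (abs_nonneg _) (by positivity)
    _ = (Real.sqrt C₀ * Real.sqrt C₀) *
        ((j : ℝ) ^ (-(3 / 4 : ℝ) - θ / 2) * (j' : ℝ) ^ (-(3 / 4 : ℝ) - θ / 2)) := by ring
    _ = C₀ * ((j : ℝ) ^ (-(3 / 4 : ℝ) - θ / 2) * (j' : ℝ) ^ (-(3 / 4 : ℝ) - θ / 2)) := by
      rw [Real.mul_self_sqrt hC₀.le]

lemma fCoef_bound (d : ℕ → ℕ) (c : ℕ → ℕ → ℕ → ℝ) (θ : ℝ) (C₀ : ℝ) (hC₀ : 0 < C₀)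
    (hc : ∀ n j : ℕ, ∀ ν < d n, (c n ν j) ^ 2 ≤ C₀ * ((max j 1 : ℕ) : ℝ) ^ (-(3 / 2 : ℝ) - θ))
    (n : ℕ) (v w : ℕ → ℝ) (Kv Kw : ℝ) (hKv0 : 0 ≤ Kv) (hKw0 : 0 ≤ Kw)
    (hv : ∑ ν ∈ Finset.range (d n), |v ν| ≤ Kv)
    (hw : ∑ ν ∈ Finset.range (d n), |w ν| ≤ Kw)
    (l j : ℕ) (hj : 1 ≤ j) :
    |fCoef d c n v w l j| ≤ 2 * Kv * Kw * C₀ *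
      ((j : ℝ) ^ (-(3 / 4 : ℝ) - θ / 2) * ((j + l : ℕ) : ℝ) ^ (-(3 / 4 : ℝ) - θ / 2)) := by
  set X : ℝ := (j : ℝ) ^ (-(3 / 4 : ℝ) - θ / 2) with hX
  set Y : ℝ := ((j + l : ℕ) : ℝ) ^ (-(3 / 4 : ℝ) - θ / 2) with hY
  have hX0 : 0 ≤ X := by rw [hX]; positivity
  have hY0 : 0 ≤ Y := by rw [hY]; positivity
  have hK0 : 0 ≤ 2 * C₀ * (X * Y) := by positivity
  have hjl : 1 ≤ j + l := le_trans hj (Nat.le_add_right j l)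
  have habs : |fCoef d c n v w l j| ≤
      ∑ ν ∈ Finset.range (d n), ∑ μ ∈ Finset.range (d n),
        |v ν| * |w μ| * (2 * C₀ * (X * Y)) := by
    unfold fCoef
    split_ifs with hl
    · subst hl
      refine (Finset.abs_sum_le_sum_abs _ _).trans (Finset.sum_le_sum ?_)
      intro ν hν
      refine (Finset.abs_sum_le_sum_abs _ _).trans (Finset.sum_le_sum ?_)
      intro μ hμ
      rw [abs_mul, abs_mul]
      have hcc := cprod_bound d c θ C₀ hC₀ hc n ν μ j j (Finset.mem_range.mp hν)
        (Finset.mem_range.mp hμ) hj hj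
      have hYX : Y = X := by rw [hY, hX, Nat.add_zero]
      rw [hYX]
      have : |c n ν j * c n μ j| ≤ 2 * C₀ * (X * X) := by
        calc |c n ν j * c n μ j| ≤ C₀ * (X * X) := hcc
          _ ≤ 2 * C₀ * (X * X) := by nlinarith
      exact mul_le_mul_of_nonneg_left this (by positivity)
    · refine (Finset.abs_sum_le_sum_abs _ _).trans (Finset.sum_le_sum ?_)
      intro ν hν
      refine (Finset.abs_sum_le_sum_abs _ _).trans (Finset.sum_le_sum ?_)
      intro μ hμ
      rw [abs_mul, abs_mul]
      have hcc1 := cprod_bound d c θ C₀ hC₀ hc n ν μ j (j + l) (Finset.mem_range.mp hν)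
        (Finset.mem_range.mp hμ) hj hjl
      have hcc2 := cprod_bound d c θ C₀ hC₀ hc n μ ν j (j + l) (Finset.mem_range.mp hμ)
        (Finset.mem_range.mp hν) hj hjl
      have : |c n ν j * c n μ (j + l) + c n μ j * c n ν (j + l)| ≤ 2 * C₀ * (X * Y) := by
        calc |c n ν j * c n μ (j + l) + c n μ j * c n ν (j + l)|
            ≤ |c n ν j * c n μ (j + l)| + |c n μ j * c n ν (j + l)| := abs_add_le _ _
          _ ≤ C₀ * (X * Y) + C₀ * (X * Y) := add_le_add hcc1 hcc2
          _ = 2 * C₀ * (X * Y) := by ring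
      exact mul_le_mul_of_nonneg_left this (by positivity)
  have hiden : ∑ ν ∈ Finset.range (d n), ∑ μ ∈ Finset.range (d n),
      |v ν| * |w μ| * (2 * C₀ * (X * Y))
      = (∑ ν ∈ Finset.range (d n), |v ν|) * (∑ μ ∈ Finset.range (d n), |w μ|)
        * (2 * C₀ * (X * Y)) := by
    rw [Finset.sum_mul_sum, Finset.sum_mul]
    exact Finset.sum_congr rfl fun ν _ => by rw [Finset.sum_mul]
  rw [hiden] at habs
  have hv0 : 0 ≤ ∑ ν ∈ Finset.range (d n), |v ν| := Finset.sum_nonneg fun _ _ => abs_nonneg _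
  have hw0 : 0 ≤ ∑ ν ∈ Finset.range (d n), |w ν| := Finset.sum_nonneg fun _ _ => abs_nonneg _
  calc |fCoef d c n v w l j|
      ≤ (∑ ν ∈ Finset.range (d n), |v ν|) * (∑ μ ∈ Finset.range (d n), |w μ|)
        * (2 * C₀ * (X * Y)) := habs
    _ ≤ Kv * Kw * (2 * C₀ * (X * Y)) := by
        apply mul_le_mul_of_nonneg_right _ hK0
        exact mul_le_mul hv hw hw0 hKv0
    _ = 2 * Kv * Kw * C₀ * (X * Y) := by ring

/-- bound (Ass1) of the technical lemma. -/
theorem stmt0 (d : ℕ → ℕ) (c : ℕ → ℕ → ℕ → ℝ) (θ : ℝ) (hθ0 : 0 < θ) (hθ : θ < 1 / 2)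
    (hA : AssumptionA d c θ) (v w : ℕ → ℕ → ℝ) (Kv Kw : ℝ)
    (hv : ∀ n, ∑ ν ∈ Finset.range (d n), |v n ν| ≤ Kv)
    (hw : ∀ n, ∑ ν ∈ Finset.range (d n), |w n ν| ≤ Kw) :
    ∃ C : ℝ, ∀ n n' : ℕ, 1 ≤ n' →
      ∑' i : ℕ, ∑' l : ℕ,
        (ftil d c n (v n) (w n) l (i + 1) - ftil d c n (v n) (w n) l (i + 1 + n')) ^ 2
        ≤ C * (n' : ℝ) ^ ((1 : ℝ) - θ) := by
  obtain ⟨C₀, hC₀, hc⟩ := hA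
  -- constants
  set qe : ℝ := -(3 / 4 : ℝ) - θ / 2 with hqe
  have hqe0 : qe ≤ 0 := by rw [hqe]; linarith
  set s₁ : ℝ := 1 / 2 + θ with hs₁
  have hs₁0 : 0 < s₁ := by rw [hs₁]; linarith
  have hs₁1 : s₁ ≤ 1 := by rw [hs₁]; linarith
  set t : ℝ := 1 / 4 - θ / 2 with ht
  have ht0 : 0 < t := by rw [ht]; linarith
  have ht1 : t ≤ 1 := by rw [ht]; linarith
  set a : ℝ := 2 / (3 + 2 * θ) with ha
  have hden : (0:ℝ) < 3 + 2 * θ := by linarith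
  have ha0 : 0 < a := by rw [ha]; positivity
  have ha2 : a < 2 := by
    rw [ha, div_lt_iff₀ hden]; linarith
  have hKv0 : 0 ≤ Kv := le_trans (Finset.sum_nonneg fun _ _ => abs_nonneg _) (hv 0)
  have hKw0 : 0 ≤ Kw := le_trans (Finset.sum_nonneg fun _ _ => abs_nonneg _) (hw 0)
  set B : ℝ := 2 * Kv * Kw * C₀ with hB
  have hB0 : 0 ≤ B := by rw [hB]; positivity
  have hta : (0:ℝ) < t ^ (2 - a) := Real.rpow_pos_of_pos ht0 _
  set D2 : ℝ := B ^ 2 * (2 / s₁) / t ^ (2 - a) with hD2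
  have hD20 : 0 ≤ D2 := by rw [hD2]; positivity
  refine ⟨D2 * (2 / θ), ?_⟩
  intro n n' hn'
  have hn'0 : (0:ℝ) < (n' : ℝ) := by exact_mod_cast hn'
  -- exponent facts
  have hp2 : qe + qe < -1 := by rw [hqe]; linarith
  have hp2s : qe + qe = -(1 + s₁) := by rw [hqe, hs₁]; ring
  -- basic bound on fCoef
  have hfb : ∀ l j : ℕ, 1 ≤ j → |fCoef d c n (v n) (w n) l j| ≤
      B * ((j : ℝ) ^ qe * ((j + l : ℕ) : ℝ) ^ qe) :=
    fun l j hj => fCoef_bound d c θ C₀ hC₀ hc n (v n) (w n) Kv Kw hKv0 hKw0 (hv n) (hw n) l j hj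
  have hfb2 : ∀ l i m : ℕ, 1 ≤ i → |fCoef d c n (v n) (w n) l (i + m)| ≤
      B * ((i + m : ℕ) : ℝ) ^ (qe + qe) := by
    intro l i m hi
    have him : 1 ≤ i + m := le_trans hi (Nat.le_add_right i m)
    have h1 := hfb l (i + m) him
    have h2 : ((i + m + l : ℕ) : ℝ) ^ qe ≤ ((i + m : ℕ) : ℝ) ^ qe :=
      rpow_nat_anti him (Nat.le_add_right _ _) hqe0
    have h3 : (0:ℝ) < ((i + m : ℕ) : ℝ) := by exact_mod_cast Nat.lt_of_lt_of_le Nat.zero_lt_one him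
    calc |fCoef d c n (v n) (w n) l (i + m)|
        ≤ B * (((i + m : ℕ) : ℝ) ^ qe * ((i + m + l : ℕ) : ℝ) ^ qe) := h1
      _ ≤ B * (((i + m : ℕ) : ℝ) ^ qe * ((i + m : ℕ) : ℝ) ^ qe) := by
          apply mul_le_mul_of_nonneg_left _ hB0
          exact mul_le_mul_of_nonneg_left h2 (by positivity)
      _ = B * ((i + m : ℕ) : ℝ) ^ (qe + qe) := by rw [Real.rpow_add h3]
  -- summability of fCoef tails
  have hsumF : ∀ l i : ℕ, 1 ≤ i → Summable (fun m : ℕ => fCoef d c n (v n) (w n) l (i + m)) := by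
    intro l i hi
    apply Summable.of_abs
    apply Summable.of_nonneg_of_le (fun m => abs_nonneg _) (fun m => hfb2 l i m hi)
    exact (summable_shift (qe + qe) hp2 i).mul_left B
  -- the difference is a finite sum
  have hdiff : ∀ l i₀ : ℕ, 1 ≤ i₀ →
      ftil d c n (v n) (w n) l i₀ - ftil d c n (v n) (w n) l (i₀ + n')
        = ∑ m ∈ range n', fCoef d c n (v n) (w n) l (i₀ + m) := by
    intro l i₀ hi₀
    have h1 := Summable.sum_add_tsum_nat_add (f := fun m : ℕ => fCoef d c n (v n) (w n) l (i₀ + m)) n'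
      (hsumF l i₀ hi₀)
    have h2 : ftil d c n (v n) (w n) l (i₀ + n')
        = ∑' m : ℕ, fCoef d c n (v n) (w n) l (i₀ + (m + n')) := by
      unfold ftil
      exact tsum_congr fun m => by congr 1; omega
    have h1' : ∑ m ∈ range n', fCoef d c n (v n) (w n) l (i₀ + m)
        + ∑' (m : ℕ), fCoef d c n (v n) (w n) l (i₀ + (m + n'))
        = ∑' (m : ℕ), fCoef d c n (v n) (w n) l (i₀ + m) := h1
    rw [h2]
    unfold ftil
    linarith [h1']
  -- per-i estimates
  have key : ∀ i : ℕ,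
      (∑' l : ℕ, (ftil d c n (v n) (w n) l (i + 1) - ftil d c n (v n) (w n) l (i + 1 + n')) ^ 2)
        ≤ D2 * (n' : ℝ) ^ ((1:ℝ) - θ) * ((i + 1 : ℕ) : ℝ) ^ (-(1 + θ)) := by
    intro i
    set i₀ : ℕ := i + 1 with hi₀def
    have hi₀ : 1 ≤ i₀ := Nat.le_add_left 1 i
    have hi₀pos : (0:ℝ) < ((i₀ : ℕ) : ℝ) := by exact_mod_cast Nat.lt_of_lt_of_le Nat.zero_lt_one hi₀
    set S : ℝ := ∑ m ∈ range n', ((i₀ + m : ℕ) : ℝ) ^ qe with hS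
    have hS0 : 0 ≤ S := by
      rw [hS]; exact Finset.sum_nonneg fun m _ => by positivity
    -- bound on each difference
    have hdb : ∀ l : ℕ, |∑ m ∈ range n', fCoef d c n (v n) (w n) l (i₀ + m)|
        ≤ B * S * ((i₀ + l : ℕ) : ℝ) ^ qe := by
      intro l
      calc |∑ m ∈ range n', fCoef d c n (v n) (w n) l (i₀ + m)|
          ≤ ∑ m ∈ range n', |fCoef d c n (v n) (w n) l (i₀ + m)| :=
            Finset.abs_sum_le_sum_abs _ _
        _ ≤ ∑ m ∈ range n', B * (((i₀ + m : ℕ) : ℝ) ^ qe * ((i₀ + l : ℕ) : ℝ) ^ qe) := by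
            apply Finset.sum_le_sum
            intro m _
            have him : 1 ≤ i₀ + m := le_trans hi₀ (Nat.le_add_right _ _)
            have h1 := hfb l (i₀ + m) him
            have h2 : ((i₀ + m + l : ℕ) : ℝ) ^ qe ≤ ((i₀ + l : ℕ) : ℝ) ^ qe :=
              rpow_nat_anti (le_trans hi₀ (Nat.le_add_right _ _)) (by omega) hqe0
            calc |fCoef d c n (v n) (w n) l (i₀ + m)|
                ≤ B * (((i₀ + m : ℕ) : ℝ) ^ qe * ((i₀ + m + l : ℕ) : ℝ) ^ qe) := h1
              _ ≤ B * (((i₀ + m : ℕ) : ℝ) ^ qe * ((i₀ + l : ℕ) : ℝ) ^ qe) := by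
                  apply mul_le_mul_of_nonneg_left _ hB0
                  exact mul_le_mul_of_nonneg_left h2 (by positivity)
        _ = B * S * ((i₀ + l : ℕ) : ℝ) ^ qe := by
            rw [hS]
            simp only [Finset.mul_sum, Finset.sum_mul]
            exact Finset.sum_congr rfl fun m _ => by ring
    have hsq : ∀ l : ℕ,
        (ftil d c n (v n) (w n) l i₀ - ftil d c n (v n) (w n) l (i₀ + n')) ^ 2
          ≤ (B * S) ^ 2 * ((i₀ + l : ℕ) : ℝ) ^ (qe + qe) := by
      intro l
      rw [hdiff l i₀ hi₀]
      have h1 := hdb l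
      have h2 : (0:ℝ) < ((i₀ + l : ℕ) : ℝ) := by
        exact_mod_cast Nat.lt_of_lt_of_le Nat.zero_lt_one (le_trans hi₀ (Nat.le_add_right _ _))
      have h3 : (∑ m ∈ range n', fCoef d c n (v n) (w n) l (i₀ + m)) ^ 2
          ≤ (B * S * ((i₀ + l : ℕ) : ℝ) ^ qe) ^ 2 := by
        rw [← sq_abs]
        exact pow_le_pow_left₀ (abs_nonneg _) h1 2
      calc (∑ m ∈ range n', fCoef d c n (v n) (w n) l (i₀ + m)) ^ 2
          ≤ (B * S * ((i₀ + l : ℕ) : ℝ) ^ qe) ^ 2 := h3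
        _ = (B * S) ^ 2 * (((i₀ + l : ℕ) : ℝ) ^ qe * ((i₀ + l : ℕ) : ℝ) ^ qe) := by ring
        _ = (B * S) ^ 2 * ((i₀ + l : ℕ) : ℝ) ^ (qe + qe) := by rw [Real.rpow_add h2]
    -- inner tsum bound
    have hsum_rhs : Summable (fun l : ℕ => (B * S) ^ 2 * ((i₀ + l : ℕ) : ℝ) ^ (qe + qe)) :=
      (summable_shift (qe + qe) hp2 i₀).mul_left _
    have hsum_lhs : Summable (fun l : ℕ =>
        (ftil d c n (v n) (w n) l i₀ - ftil d c n (v n) (w n) l (i₀ + n')) ^ 2) :=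
      Summable.of_nonneg_of_le (fun l => sq_nonneg _) hsq hsum_rhs
    have hInner : (∑' l : ℕ,
        (ftil d c n (v n) (w n) l i₀ - ftil d c n (v n) (w n) l (i₀ + n')) ^ 2)
          ≤ (B * S) ^ 2 * ((2 / s₁) * ((i₀ : ℕ) : ℝ) ^ (-s₁)) := by
      have h1 := Summable.tsum_le_tsum hsq hsum_lhs hsum_rhs
      rw [tsum_mul_left] at h1
      refine h1.trans ?_
      apply mul_le_mul_of_nonneg_left _ (by positivity)
      have h2 := tail_sum s₁ hs₁0 hs₁1 i₀ hi₀
      simp only [hp2s]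
      exact h2
    -- the two bounds on S
    have hS1 : S ≤ (n' : ℝ) * ((i₀ : ℕ) : ℝ) ^ qe := by
      rw [hS]
      calc ∑ m ∈ range n', ((i₀ + m : ℕ) : ℝ) ^ qe
          ≤ ∑ m ∈ range n', ((i₀ : ℕ) : ℝ) ^ qe :=
            Finset.sum_le_sum fun m _ => rpow_nat_anti hi₀ (Nat.le_add_right _ _) hqe0
        _ = (n' : ℝ) * ((i₀ : ℕ) : ℝ) ^ qe := by
            rw [Finset.sum_const, Finset.card_range, nsmul_eq_mul]
    have hS2 : S ≤ (n' : ℝ) ^ t / t := by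
      rw [hS]
      calc ∑ m ∈ range n', ((i₀ + m : ℕ) : ℝ) ^ qe
          ≤ ∑ m ∈ range n', ((m + 1 : ℕ) : ℝ) ^ qe :=
            Finset.sum_le_sum fun m _ => rpow_nat_anti (Nat.le_add_left 1 m) (by omega) hqe0
        _ ≤ (n' : ℝ) ^ t / t := by
            have := partial_sum t ht0 ht1 n'
            have het : t - 1 = qe := by rw [ht, hqe]; ring
            rwa [het] at this
    -- interpolation
    set x : ℝ := (n' : ℝ) * ((i₀ : ℕ) : ℝ) ^ qe with hx
    set y : ℝ := (n' : ℝ) ^ t / t with hy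
    have hx0 : 0 < x := by rw [hx]; positivity
    have hy0 : 0 < y := by rw [hy]; positivity
    have hSsq : S ^ 2 ≤ x ^ a * y ^ (2 - a) := by
      have hsum2 : S ^ (2:ℝ) = S ^ a * S ^ (2 - a) := by
        rw [← Real.rpow_add' hS0 (by norm_num)]
        norm_num
      have h2r : S ^ 2 = S ^ (2:ℝ) := by
        rw [show (2:ℝ) = ((2:ℕ):ℝ) by norm_num, Real.rpow_natCast]
      rw [h2r, hsum2]
      apply mul_le_mul (Real.rpow_le_rpow hS0 hS1 ha0.le)
        (Real.rpow_le_rpow hS0 hS2 (by linarith)) (by positivity) (by positivity)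
    -- exponent algebra
    have e1 : a + t * (2 - a) = 1 - θ := by
      rw [ha, ht]; field_simp; ring
    have e2 : qe * a + -s₁ = -(1 + θ) := by
      rw [hqe, ha, hs₁]; field_simp; ring
    have hEq : x ^ a * y ^ (2 - a) * ((i₀ : ℕ) : ℝ) ^ (-s₁)
        = (n' : ℝ) ^ ((1:ℝ) - θ) * ((i₀ : ℕ) : ℝ) ^ (-(1 + θ)) / t ^ (2 - a) := by
      have hxa : x ^ a = (n' : ℝ) ^ a * ((i₀ : ℕ) : ℝ) ^ (qe * a) := by
        rw [hx, Real.mul_rpow hn'0.le (by positivity), Real.rpow_mul hi₀pos.le]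
      have hyb : y ^ (2 - a) = (n' : ℝ) ^ (t * (2 - a)) / t ^ (2 - a) := by
        rw [hy, Real.div_rpow (by positivity) ht0.le, ← Real.rpow_mul hn'0.le]
      rw [hxa, hyb]
      calc (n' : ℝ) ^ a * ((i₀ : ℕ) : ℝ) ^ (qe * a) * ((n' : ℝ) ^ (t * (2 - a)) / t ^ (2 - a))
            * ((i₀ : ℕ) : ℝ) ^ (-s₁)
          = ((n' : ℝ) ^ a * (n' : ℝ) ^ (t * (2 - a)))
            * (((i₀ : ℕ) : ℝ) ^ (qe * a) * ((i₀ : ℕ) : ℝ) ^ (-s₁)) / t ^ (2 - a) := by ring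
        _ = (n' : ℝ) ^ (a + t * (2 - a)) * ((i₀ : ℕ) : ℝ) ^ (qe * a + -s₁) / t ^ (2 - a) := by
            rw [← Real.rpow_add hn'0, ← Real.rpow_add hi₀pos]
        _ = (n' : ℝ) ^ ((1:ℝ) - θ) * ((i₀ : ℕ) : ℝ) ^ (-(1 + θ)) / t ^ (2 - a) := by
            rw [e1, e2]
    -- assemble per-i bound
    have hfinal : (B * S) ^ 2 * ((2 / s₁) * ((i₀ : ℕ) : ℝ) ^ (-s₁))
        ≤ D2 * (n' : ℝ) ^ ((1:ℝ) - θ) * ((i₀ : ℕ) : ℝ) ^ (-(1 + θ)) := by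
      have h1 : (B * S) ^ 2 * ((2 / s₁) * ((i₀ : ℕ) : ℝ) ^ (-s₁))
          = B ^ 2 * (2 / s₁) * (S ^ 2 * ((i₀ : ℕ) : ℝ) ^ (-s₁)) := by ring
      rw [h1]
      have h2 : S ^ 2 * ((i₀ : ℕ) : ℝ) ^ (-s₁)
          ≤ (x ^ a * y ^ (2 - a)) * ((i₀ : ℕ) : ℝ) ^ (-s₁) :=
        mul_le_mul_of_nonneg_right hSsq (by positivity)
      calc B ^ 2 * (2 / s₁) * (S ^ 2 * ((i₀ : ℕ) : ℝ) ^ (-s₁))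
          ≤ B ^ 2 * (2 / s₁) * ((x ^ a * y ^ (2 - a)) * ((i₀ : ℕ) : ℝ) ^ (-s₁)) := by
            apply mul_le_mul_of_nonneg_left h2 (by positivity)
        _ = B ^ 2 * (2 / s₁) *
            ((n' : ℝ) ^ ((1:ℝ) - θ) * ((i₀ : ℕ) : ℝ) ^ (-(1 + θ)) / t ^ (2 - a)) := by
            rw [hEq]
        _ = D2 * (n' : ℝ) ^ ((1:ℝ) - θ) * ((i₀ : ℕ) : ℝ) ^ (-(1 + θ)) := by
            rw [hD2]; ring
    have hgoal : i + 1 + n' = i₀ + n' := rfl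
    calc (∑' l : ℕ,
        (ftil d c n (v n) (w n) l (i + 1) - ftil d c n (v n) (w n) l (i + 1 + n')) ^ 2)
        ≤ (B * S) ^ 2 * ((2 / s₁) * ((i₀ : ℕ) : ℝ) ^ (-s₁)) := hInner
      _ ≤ D2 * (n' : ℝ) ^ ((1:ℝ) - θ) * ((i₀ : ℕ) : ℝ) ^ (-(1 + θ)) := hfinal
  -- outer sum
  have hθ1 : θ ≤ 1 := by linarith
  have houter_rhs : Summable (fun i : ℕ =>
      D2 * (n' : ℝ) ^ ((1:ℝ) - θ) * ((i + 1 : ℕ) : ℝ) ^ (-(1 + θ))) := by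
    have h1 : Summable (fun i : ℕ => ((1 + i : ℕ) : ℝ) ^ (-(1 + θ))) :=
      summable_shift (-(1 + θ)) (by linarith) 1
    have h2 : Summable (fun i : ℕ => ((i + 1 : ℕ) : ℝ) ^ (-(1 + θ))) := by
      simpa [add_comm] using h1
    exact h2.mul_left _
  have houter_lhs : Summable (fun i : ℕ => ∑' l : ℕ,
      (ftil d c n (v n) (w n) l (i + 1) - ftil d c n (v n) (w n) l (i + 1 + n')) ^ 2) :=
    Summable.of_nonneg_of_le (fun i => tsum_nonneg fun l => sq_nonneg _) key houter_rhs
  calc ∑' i : ℕ, ∑' l : ℕ,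
      (ftil d c n (v n) (w n) l (i + 1) - ftil d c n (v n) (w n) l (i + 1 + n')) ^ 2
      ≤ ∑' i : ℕ, D2 * (n' : ℝ) ^ ((1:ℝ) - θ) * ((i + 1 : ℕ) : ℝ) ^ (-(1 + θ)) :=
        Summable.tsum_le_tsum key houter_lhs houter_rhs
    _ = D2 * (n' : ℝ) ^ ((1:ℝ) - θ) * ∑' i : ℕ, ((i + 1 : ℕ) : ℝ) ^ (-(1 + θ)) := by
        rw [tsum_mul_left]
    _ ≤ D2 * (n' : ℝ) ^ ((1:ℝ) - θ) * ((2 / θ) * ((1 : ℕ) : ℝ) ^ (-θ)) := by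
        apply mul_le_mul_of_nonneg_left _ (by positivity)
        have h1 := tail_sum θ hθ0 hθ1 1 le_rfl
        have h2 : ∑' i : ℕ, ((i + 1 : ℕ) : ℝ) ^ (-(1 + θ))
            = ∑' m : ℕ, ((1 + m : ℕ) : ℝ) ^ (-(1 + θ)) :=
          tsum_congr fun m => by rw [Nat.add_comm]
        rw [h2]
        exact h1
    _ = D2 * (2 / θ) * (n' : ℝ) ^ ((1:ℝ) - θ) := by
        norm_num
        ring

end
end

section
/- Under Assumption (A), for any families of weighting vectors v_n, w_n ∈ ℝ^{d_n} with sup_n ‖v_n‖₁ < ∞ and sup_n ‖w_n‖₁ < ∞, there exists a constant C (depending on the weighting vectors only through their ℓ1-norms) such that for all n' = 1, 2, …: sup_{n ∈ ℕ} Σ_{k=1}^{n'} Σ_{r=0}^∞ ( f̃_{r+k,0}^{(n)}(v_n,w_n) )² ≤ C (n')^{1−θ}. -/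
open MeasureTheory Filter Finset

noncomputable section

/-- telescoping inequality for the tail sum -/
lemma tele1 {θ : ℝ} (hθ0 : 0 < θ) {t : ℝ} (ht : 1 ≤ t) :
    θ * (t+1) ^ (-(1+θ)) ≤ t ^ (-θ) - (t+1) ^ (-θ) := by
  have ht0 : (0:ℝ) < t := lt_of_lt_of_le one_pos ht
  have ht1 : (0:ℝ) < t + 1 := by linarith
  have hA : (0:ℝ) < t ^ θ := Real.rpow_pos_of_pos ht0 θ
  have hB : (0:ℝ) < (t+1) ^ θ := Real.rpow_pos_of_pos ht1 θ
  have h3 : (t+1) ^ (1+θ) = (t+1) * (t+1)^θ := by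
    rw [Real.rpow_add ht1, Real.rpow_one]
  have key : t * t ^ θ + (1+θ) * t ^ θ ≤ (t+1) * (t+1) ^ θ := by
    have hb := one_add_mul_self_le_rpow_one_add (s := 1/t)
      (le_trans (by norm_num) (by positivity : (0:ℝ) ≤ 1/t)) (p := 1+θ) (by linarith)
    have h2 : (1 + 1/t : ℝ) = (t+1)/t := by field_simp
    rw [h2, Real.div_rpow (by linarith) ht0.le] at hb
    have h5 : (0:ℝ) < t ^ (1+θ) := Real.rpow_pos_of_pos ht0 _
    rw [le_div_iff₀ h5] at hb
    have h4 : t ^ (1+θ) = t * t^θ := by rw [Real.rpow_add ht0, Real.rpow_one]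
    rw [h4, h3] at hb
    have h6 : (1 + (1+θ) * (1/t)) * (t * t^θ) = t * t^θ + (1+θ) * t^θ := by
      field_simp
    linarith [h6 ▸ hb]
  have k2 : θ * t^θ ≤ ((t+1)^θ - t^θ) * (t+1) := by nlinarith
  rw [Real.rpow_neg ht0.le, Real.rpow_neg ht1.le, Real.rpow_neg ht1.le, h3]
  rw [show (t^θ)⁻¹ - ((t+1)^θ)⁻¹ = ((t+1)^θ - t^θ) / (t^θ * (t+1)^θ) by
    field_simp]
  rw [← div_eq_mul_inv, div_le_div_iff₀ (by positivity) (by positivity)]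
  nlinarith [mul_le_mul_of_nonneg_right k2 hB.le]

/-- telescoping inequality for the partial sum of k^{-θ} -/
lemma tele2 {θ : ℝ} (hθ0 : 0 < θ) (hθ1 : θ < 1) {k : ℝ} (hk : 1 ≤ k) :
    (1-θ) * k ^ (-θ) ≤ k ^ (1-θ) - (k-1) ^ (1-θ) := by
  have hk0 : (0:ℝ) < k := lt_of_lt_of_le one_pos hk
  have hb := rpow_one_add_le_one_add_mul_self (s := -(1/k)) (by
      rw [neg_le_neg_iff]
      exact (div_le_one hk0).2 hk) (p := 1-θ) (by linarith) (by linarith)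
  have h2 : (1 + -(1/k) : ℝ) = (k-1)/k := by field_simp; ring
  rw [h2, Real.div_rpow (by linarith) hk0.le] at hb
  have h5 : (0:ℝ) < k ^ (1-θ) := Real.rpow_pos_of_pos hk0 _
  rw [div_le_iff₀ h5] at hb
  have h4 : k ^ (1-θ) = k^(-θ) * k := by
    rw [show (1:ℝ)-θ = -θ+1 by ring, Real.rpow_add_one hk0.ne']
  have h6 : (1 + (1-θ)*-(1/k)) * k^(1-θ) = k^(1-θ) - (1-θ)*k^(-θ) := by
    rw [h4]; field_simp; ring
  linarith [h6 ▸ hb]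

/-- tail sum bound -/
lemma tail_sum_s1 {θ : ℝ} (hθ0 : 0 < θ) {k : ℕ} (hk : 1 ≤ k) :
    ∑' r : ℕ, ((r + k : ℕ) : ℝ) ^ (-(1+θ)) ≤ (1 + 1/θ) * (k : ℝ) ^ (-θ) := by
  have hk1 : (1:ℝ) ≤ (k:ℝ) := by exact_mod_cast hk
  have hkpos : (0:ℝ) < (k:ℝ) := by linarith
  apply Real.tsum_le_of_sum_range_le (fun r => Real.rpow_nonneg (by positivity) _)
  intro N
  rcases Nat.eq_zero_or_pos N with rfl | hN
  · simp
    positivity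
  · obtain ⟨M, rfl⟩ : ∃ M, N = M + 1 := ⟨N - 1, (Nat.succ_pred_eq_of_pos hN).symm⟩
    rw [Finset.sum_range_succ']
    have hterm : ∀ r : ℕ, ((r + 1 + k : ℕ) : ℝ) ^ (-(1+θ)) ≤
        (1/θ) * (((r + k : ℕ):ℝ) ^ (-θ) - ((r + 1 + k : ℕ):ℝ) ^ (-θ)) := by
      intro r
      have ht : (1:ℝ) ≤ ((r + k : ℕ):ℝ) := by
        exact_mod_cast Nat.one_le_iff_ne_zero.2 (by omega)
      have h1 := tele1 hθ0 ht
      have hc : ((r + 1 + k : ℕ) : ℝ) = ((r + k : ℕ):ℝ) + 1 := by push_cast; ring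
      rw [hc]
      rw [div_mul_eq_mul_div, le_div_iff₀ hθ0, one_mul, mul_comm]
      exact h1
    calc (∑ r ∈ Finset.range M, ((r + 1 + k : ℕ) : ℝ) ^ (-(1+θ))) + ((0 + k : ℕ):ℝ) ^ (-(1+θ))
        ≤ (∑ r ∈ Finset.range M, (1/θ) * (((r + k : ℕ):ℝ) ^ (-θ) - ((r + 1 + k : ℕ):ℝ) ^ (-θ)))
          + (k:ℝ) ^ (-θ) := by
          gcongr with r hr
          · exact hterm r
          · simp only [Nat.zero_add]
            exact Real.rpow_le_rpow_of_exponent_le hk1 (by linarith)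
      _ = (1/θ) * ((k:ℝ)^(-θ) - ((M + k:ℕ):ℝ)^(-θ)) + (k:ℝ)^(-θ) := by
          rw [← Finset.mul_sum]
          congr 1
          rw [Finset.sum_range_sub' (f := fun r => ((r + k : ℕ):ℝ) ^ (-θ))]
          simp
      _ ≤ (1/θ) * (k:ℝ)^(-θ) + (k:ℝ)^(-θ) := by
          have : (0:ℝ) ≤ ((M + k:ℕ):ℝ)^(-θ) := Real.rpow_nonneg (by positivity) _
          have h1θ : (0:ℝ) < 1/θ := by positivity
          nlinarith
      _ = (1 + 1/θ) * (k:ℝ)^(-θ) := by ring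

/-- partial sum of k^{-θ} -/
lemma sum_pow_le {θ : ℝ} (hθ0 : 0 < θ) (hθ1 : θ < 1) (n' : ℕ) :
    ∑ k ∈ Finset.Icc 1 n', (k:ℝ) ^ (-θ) ≤ (1/(1-θ)) * (n':ℝ) ^ (1-θ) := by
  have h1θ : (0:ℝ) < 1 - θ := by linarith
  have : ∑ k ∈ Finset.Icc 1 n', (k:ℝ) ^ (-θ) =
      ∑ i ∈ Finset.range n', ((1 + i : ℕ):ℝ) ^ (-θ) := by
    rw [← Finset.Ico_add_one_right_eq_Icc, Finset.sum_Ico_eq_sum_range]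
    simp
  rw [this]
  have hterm : ∀ i : ℕ, ((1 + i : ℕ):ℝ) ^ (-θ) ≤
      (1/(1-θ)) * (((i+1:ℕ):ℝ) ^ (1-θ) - ((i:ℕ):ℝ) ^ (1-θ)) := by
    intro i
    have hk : (1:ℝ) ≤ ((i+1:ℕ):ℝ) := by exact_mod_cast Nat.one_le_iff_ne_zero.2 (by omega)
    have h2 := tele2 hθ0 hθ1 hk
    have hc : ((i+1:ℕ):ℝ) - 1 = (i:ℝ) := by push_cast; ring
    rw [hc] at h2
    have hc2 : ((1 + i : ℕ):ℝ) = ((i+1:ℕ):ℝ) := by push_cast; ring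
    rw [hc2, div_mul_eq_mul_div, le_div_iff₀ h1θ, one_mul, mul_comm]
    exact h2
  calc ∑ i ∈ Finset.range n', ((1 + i : ℕ):ℝ) ^ (-θ)
      ≤ ∑ i ∈ Finset.range n', (1/(1-θ)) * (((i+1:ℕ):ℝ) ^ (1-θ) - ((i:ℕ):ℝ) ^ (1-θ)) := by
        gcongr with i hi; exact hterm i
    _ = (1/(1-θ)) * ((n':ℝ) ^ (1-θ) - ((0:ℕ):ℝ) ^ (1-θ)) := by
        rw [← Finset.mul_sum, Finset.sum_range_sub (f := fun i => ((i:ℕ):ℝ) ^ (1-θ))]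
    _ = (1/(1-θ)) * (n':ℝ) ^ (1-θ) := by
        simp [Real.zero_rpow h1θ.ne']

lemma summable_max_rpow {p : ℝ} (hp : p < -1) :
    Summable (fun j : ℕ => ((max j 1 : ℕ):ℝ) ^ p) := by
  apply (summable_nat_add_iff 1).1
  have h := Real.summable_nat_rpow.2 hp
  have h2 := (summable_nat_add_iff (f := fun n : ℕ => (n:ℝ) ^ p) 1).2 h
  convert h2 using 2 with n
  congr 1
  · norm_cast
    omega

/-- key exponent splitting inequality -/
lemma keyexp {θ : ℝ} (hθ0 : 0 < θ) (j l : ℕ) (hl : 1 ≤ l) :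
    ((j+l:ℕ):ℝ) ^ (-(3/4+θ/2)) ≤ ((max j 1 : ℕ):ℝ) ^ (-(1/4:ℝ)) * (l:ℝ) ^ (-((1+θ)/2)) := by
  have hm1 : (1:ℝ) ≤ ((max j 1 : ℕ):ℝ) := Nat.one_le_cast.2 (le_max_right j 1)
  have hL1 : (1:ℝ) ≤ (l:ℝ) := Nat.one_le_cast.2 hl
  have hs1 : (1:ℝ) ≤ ((j+l:ℕ):ℝ) := Nat.one_le_cast.2 (by omega)
  have hm0 : (0:ℝ) < ((max j 1 : ℕ):ℝ) := by linarith
  have hL0 : (0:ℝ) < (l:ℝ) := by linarith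
  have hs0 : (0:ℝ) < ((j+l:ℕ):ℝ) := by linarith
  have claim : ((max j 1 : ℕ):ℝ) ^ (1/4:ℝ) * (l:ℝ) ^ ((1+θ)/2) ≤ ((j+l:ℕ):ℝ) ^ (3/4+θ/2) := by
    rcases le_total (max j 1) l with h | h
    · have hml : ((max j 1 : ℕ):ℝ) ≤ (l:ℝ) := Nat.cast_le.2 h
      calc ((max j 1 : ℕ):ℝ) ^ (1/4:ℝ) * (l:ℝ) ^ ((1+θ)/2)
          ≤ (l:ℝ) ^ (1/4:ℝ) * (l:ℝ) ^ ((1+θ)/2) := by gcongr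
        _ = (l:ℝ) ^ (3/4+θ/2) := by
            rw [← Real.rpow_add hL0]; ring_nf
        _ ≤ ((j+l:ℕ):ℝ) ^ (3/4+θ/2) := by
            apply Real.rpow_le_rpow hL0.le (Nat.cast_le.2 (by omega))
            positivity
    · have hlm : (l:ℝ) ≤ ((max j 1 : ℕ):ℝ) := Nat.cast_le.2 h
      have hms : ((max j 1 : ℕ):ℝ) ≤ ((j+l:ℕ):ℝ) := Nat.cast_le.2 (by omega)
      calc ((max j 1 : ℕ):ℝ) ^ (1/4:ℝ) * (l:ℝ) ^ ((1+θ)/2)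
          ≤ ((max j 1 : ℕ):ℝ) ^ (1/4:ℝ) * ((max j 1 : ℕ):ℝ) ^ ((1+θ)/2) := by gcongr
        _ = ((max j 1 : ℕ):ℝ) ^ (3/4+θ/2) := by
            rw [← Real.rpow_add hm0]; ring_nf
        _ ≤ ((j+l:ℕ):ℝ) ^ (3/4+θ/2) := by
            exact Real.rpow_le_rpow hm0.le hms (by positivity)
  have hP : (0:ℝ) < ((max j 1 : ℕ):ℝ) ^ (1/4:ℝ) * (l:ℝ) ^ ((1+θ)/2) := by positivity
  rw [Real.rpow_neg hs0.le, Real.rpow_neg hm0.le, Real.rpow_neg hL0.le, ← mul_inv]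
  exact inv_anti₀ hP claim

lemma sqrt_c_mul_rpow {C x : ℝ} (e : ℝ) (hC : 0 ≤ C) (hx : 0 ≤ x) :
    Real.sqrt (C * x ^ e) = Real.sqrt C * x ^ (e/2) := by
  rw [Real.sqrt_mul hC]
  congr 1
  rw [Real.sqrt_eq_rpow, ← Real.rpow_mul hx]
  congr 1
  ring

set_option maxHeartbeats 1000000 in
/-- bound (Ass2) of the technical lemma. -/
theorem stmt1 (d : ℕ → ℕ) (c : ℕ → ℕ → ℕ → ℝ) (θ : ℝ) (hθ0 : 0 < θ) (hθ : θ < 1 / 2)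
    (hA : AssumptionA d c θ) (v w : ℕ → ℕ → ℝ) (Kv Kw : ℝ)
    (hv : ∀ n, ∑ ν ∈ Finset.range (d n), |v n ν| ≤ Kv)
    (hw : ∀ n, ∑ ν ∈ Finset.range (d n), |w n ν| ≤ Kw) :
    ∃ C : ℝ, ∀ n n' : ℕ, 1 ≤ n' →
      ∑ k ∈ Finset.Icc 1 n', ∑' r : ℕ,
        (ftil d c n (v n) (w n) (r + k) 0) ^ 2
        ≤ C * (n' : ℝ) ^ ((1 : ℝ) - θ) := by
  obtain ⟨C₀, hC₀, hC⟩ := hA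
  have hKv0 : 0 ≤ Kv := le_trans (Finset.sum_nonneg fun _ _ => abs_nonneg _) (hv 0)
  have hKw0 : 0 ≤ Kw := le_trans (Finset.sum_nonneg fun _ _ => abs_nonneg _) (hw 0)
  set B : ℝ := 2 * C₀ * Kv * Kw with hB
  have hB0 : 0 ≤ B := by positivity
  -- pointwise bound on fCoef
  have hfc : ∀ n l j : ℕ, 1 ≤ l → |fCoef d c n (v n) (w n) l j| ≤
      B * ((max j 1 : ℕ):ℝ) ^ (-(1+θ/2)) * (l:ℝ) ^ (-((1+θ)/2)) := by
    intro n l j hl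
    have hm0 : (0:ℝ) < ((max j 1 : ℕ):ℝ) := by
      have : (1:ℝ) ≤ ((max j 1 : ℕ):ℝ) := Nat.one_le_cast.2 (le_max_right j 1)
      linarith
    have hs0 : (0:ℝ) ≤ ((j+l:ℕ):ℝ) := Nat.cast_nonneg _
    -- bound on products of coefficients
    have hprod : ∀ ν μ : ℕ, ν < d n → μ < d n →
        |c n ν j| * |c n μ (j+l)| ≤
        C₀ * ((max j 1 : ℕ):ℝ) ^ (-(3/4+θ/2)) * ((j+l:ℕ):ℝ) ^ (-(3/4+θ/2)) := by
      intro ν μ hν hμ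
      have e1 : |c n ν j| ≤ Real.sqrt (C₀ * ((max j 1 : ℕ):ℝ) ^ (-(3/2:ℝ)-θ)) := by
        rw [← Real.sqrt_sq_eq_abs]
        exact Real.sqrt_le_sqrt (hC n j ν hν)
      have e2 : |c n μ (j+l)| ≤ Real.sqrt (C₀ * ((j+l:ℕ):ℝ) ^ (-(3/2:ℝ)-θ)) := by
        rw [← Real.sqrt_sq_eq_abs]
        have h := hC n (j+l) μ hμ
        rw [show max (j+l) 1 = j + l by omega] at h
        exact Real.sqrt_le_sqrt h
      calc |c n ν j| * |c n μ (j+l)|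
          ≤ Real.sqrt (C₀ * ((max j 1 : ℕ):ℝ) ^ (-(3/2:ℝ)-θ)) *
            Real.sqrt (C₀ * ((j+l:ℕ):ℝ) ^ (-(3/2:ℝ)-θ)) :=
            mul_le_mul e1 e2 (abs_nonneg _) (Real.sqrt_nonneg _)
        _ = C₀ * ((max j 1 : ℕ):ℝ) ^ (-(3/4+θ/2)) * ((j+l:ℕ):ℝ) ^ (-(3/4+θ/2)) := by
            rw [sqrt_c_mul_rpow _ hC₀.le hm0.le, sqrt_c_mul_rpow _ hC₀.le hs0,
              show ((-(3/2:ℝ)-θ)/2) = -(3/4+θ/2) by ring]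
            rw [show Real.sqrt C₀ * ((max j 1 : ℕ):ℝ) ^ (-(3/4+θ/2)) *
              (Real.sqrt C₀ * ((j+l:ℕ):ℝ) ^ (-(3/4+θ/2))) =
              (Real.sqrt C₀ * Real.sqrt C₀) * ((max j 1 : ℕ):ℝ) ^ (-(3/4+θ/2)) *
              ((j+l:ℕ):ℝ) ^ (-(3/4+θ/2)) by ring, Real.mul_self_sqrt hC₀.le]
    -- bound on fCoef by the double sum of absolute values
    have habs : |fCoef d c n (v n) (w n) l j| ≤
        Kv * Kw * (2 * (C₀ * ((max j 1 : ℕ):ℝ) ^ (-(3/4+θ/2)) * ((j+l:ℕ):ℝ) ^ (-(3/4+θ/2)))) := by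
      have hKK : ∀ ν ∈ Finset.range (d n), ∀ μ ∈ Finset.range (d n),
          |v n ν * w n μ * (c n ν j * c n μ (j + l) + c n μ j * c n ν (j + l))| ≤
          |v n ν| * |w n μ| *
            (2 * (C₀ * ((max j 1 : ℕ):ℝ) ^ (-(3/4+θ/2)) * ((j+l:ℕ):ℝ) ^ (-(3/4+θ/2)))) := by
        intro ν hν μ hμ
        rw [abs_mul, abs_mul]
        gcongr
        calc |c n ν j * c n μ (j + l) + c n μ j * c n ν (j + l)|
            ≤ |c n ν j * c n μ (j + l)| + |c n μ j * c n ν (j + l)| := abs_add_le _ _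
          _ = |c n ν j| * |c n μ (j + l)| + |c n μ j| * |c n ν (j + l)| := by
              rw [abs_mul, abs_mul]
          _ ≤ C₀ * ((max j 1 : ℕ):ℝ) ^ (-(3/4+θ/2)) * ((j+l:ℕ):ℝ) ^ (-(3/4+θ/2)) +
              C₀ * ((max j 1 : ℕ):ℝ) ^ (-(3/4+θ/2)) * ((j+l:ℕ):ℝ) ^ (-(3/4+θ/2)) :=
              add_le_add (hprod ν μ (Finset.mem_range.1 hν) (Finset.mem_range.1 hμ))
                (hprod μ ν (Finset.mem_range.1 hμ) (Finset.mem_range.1 hν))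
          _ = 2 * (C₀ * ((max j 1 : ℕ):ℝ) ^ (-(3/4+θ/2)) * ((j+l:ℕ):ℝ) ^ (-(3/4+θ/2))) := by
              ring
      calc |fCoef d c n (v n) (w n) l j|
          ≤ ∑ ν ∈ Finset.range (d n), ∑ μ ∈ Finset.range (d n),
              |v n ν| * |w n μ| *
              (2 * (C₀ * ((max j 1 : ℕ):ℝ) ^ (-(3/4+θ/2)) * ((j+l:ℕ):ℝ) ^ (-(3/4+θ/2)))) := by
            rw [fCoef, if_neg (by omega)]
            refine (Finset.abs_sum_le_sum_abs _ _).trans (Finset.sum_le_sum fun ν hν => ?_)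
            refine (Finset.abs_sum_le_sum_abs _ _).trans (Finset.sum_le_sum fun μ hμ => ?_)
            exact hKK ν hν μ hμ
        _ = (∑ ν ∈ Finset.range (d n), |v n ν|) * (∑ μ ∈ Finset.range (d n), |w n μ|) *
              (2 * (C₀ * ((max j 1 : ℕ):ℝ) ^ (-(3/4+θ/2)) * ((j+l:ℕ):ℝ) ^ (-(3/4+θ/2)))) := by
            rw [Finset.sum_mul_sum, Finset.sum_mul]
            refine Finset.sum_congr rfl fun ν _ => ?_
            rw [Finset.sum_mul]
        _ ≤ Kv * Kw *
              (2 * (C₀ * ((max j 1 : ℕ):ℝ) ^ (-(3/4+θ/2)) * ((j+l:ℕ):ℝ) ^ (-(3/4+θ/2)))) := by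
            have hnn : (0:ℝ) ≤
                2 * (C₀ * ((max j 1 : ℕ):ℝ) ^ (-(3/4+θ/2)) * ((j+l:ℕ):ℝ) ^ (-(3/4+θ/2))) := by
              positivity
            exact mul_le_mul (mul_le_mul (hv n) (hw n)
              (Finset.sum_nonneg fun _ _ => abs_nonneg _) hKv0) le_rfl hnn (by positivity)
    -- apply the exponent splitting
    calc |fCoef d c n (v n) (w n) l j|
        ≤ Kv * Kw * (2 * (C₀ * ((max j 1 : ℕ):ℝ) ^ (-(3/4+θ/2)) * ((j+l:ℕ):ℝ) ^ (-(3/4+θ/2)))) :=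
          habs
      _ ≤ Kv * Kw * (2 * (C₀ * ((max j 1 : ℕ):ℝ) ^ (-(3/4+θ/2)) *
            (((max j 1 : ℕ):ℝ) ^ (-(1/4:ℝ)) * (l:ℝ) ^ (-((1+θ)/2))))) := by
          gcongr
          exact keyexp hθ0 j l hl
      _ = B * ((max j 1 : ℕ):ℝ) ^ (-(1+θ/2)) * (l:ℝ) ^ (-((1+θ)/2)) := by
          rw [show (-(1+θ/2)) = (-(3/4+θ/2)) + (-(1/4:ℝ)) by ring, Real.rpow_add hm0, hB]
          ring
  -- the constant S
  set S : ℝ := ∑' j : ℕ, ((max j 1 : ℕ):ℝ) ^ (-(1+θ/2)) with hSdef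
  have hSsum : Summable (fun j : ℕ => ((max j 1 : ℕ):ℝ) ^ (-(1+θ/2))) :=
    summable_max_rpow (by linarith)
  have hS0 : 0 ≤ S := tsum_nonneg fun j => Real.rpow_nonneg (Nat.cast_nonneg _) _
  -- bound on ftil
  have hftil : ∀ n l : ℕ, 1 ≤ l →
      |ftil d c n (v n) (w n) l 0| ≤ B * S * (l:ℝ) ^ (-((1+θ)/2)) := by
    intro n l hl
    have hL0 : (0:ℝ) ≤ (l:ℝ) ^ (-((1+θ)/2)) := Real.rpow_nonneg (Nat.cast_nonneg _) _
    have hre : (fun j : ℕ => B * ((max j 1 : ℕ):ℝ) ^ (-(1+θ/2)) * (l:ℝ) ^ (-((1+θ)/2))) =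
        (fun j : ℕ => (B * (l:ℝ) ^ (-((1+θ)/2))) * ((max j 1 : ℕ):ℝ) ^ (-(1+θ/2))) := by
      funext j; ring
    have hmaj : Summable (fun j : ℕ =>
        B * ((max j 1 : ℕ):ℝ) ^ (-(1+θ/2)) * (l:ℝ) ^ (-((1+θ)/2))) := by
      rw [hre]
      exact hSsum.mul_left _
    have habs_sum : Summable (fun j : ℕ => |fCoef d c n (v n) (w n) l j|) :=
      Summable.of_nonneg_of_le (fun _ => abs_nonneg _) (fun j => hfc n l j hl) hmaj
    have h0 : ftil d c n (v n) (w n) l 0 = ∑' j : ℕ, fCoef d c n (v n) (w n) l j := by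
      rw [ftil]
      exact tsum_congr fun j => by rw [Nat.zero_add]
    rw [h0]
    calc |∑' j : ℕ, fCoef d c n (v n) (w n) l j|
        ≤ ∑' j : ℕ, |fCoef d c n (v n) (w n) l j| := by
          have hnorm : Summable (fun j : ℕ => ‖fCoef d c n (v n) (w n) l j‖) := by
            simpa [Real.norm_eq_abs] using habs_sum
          simpa [Real.norm_eq_abs] using norm_tsum_le_tsum_norm hnorm
      _ ≤ ∑' j : ℕ, B * ((max j 1 : ℕ):ℝ) ^ (-(1+θ/2)) * (l:ℝ) ^ (-((1+θ)/2)) :=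
          Summable.tsum_le_tsum (fun j => hfc n l j hl) habs_sum hmaj
      _ = B * S * (l:ℝ) ^ (-((1+θ)/2)) := by
          rw [tsum_congr (fun j : ℕ => congrFun hre j), tsum_mul_left, hSdef]
          ring
  -- squares
  have hsq : ∀ n k r : ℕ, 1 ≤ k →
      (ftil d c n (v n) (w n) (r + k) 0) ^ 2 ≤ (B*S)^2 * ((r + k : ℕ):ℝ) ^ (-(1+θ)) := by
    intro n k r hk
    have hl : 1 ≤ r + k := by omega
    have hL0 : (0:ℝ) < ((r+k:ℕ):ℝ) := by
      have : (1:ℝ) ≤ ((r+k:ℕ):ℝ) := Nat.one_le_cast.2 hl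
      linarith
    have h := hftil n (r+k) hl
    have hXX : ((r+k:ℕ):ℝ) ^ (-((1+θ)/2)) * ((r+k:ℕ):ℝ) ^ (-((1+θ)/2)) =
        ((r+k:ℕ):ℝ) ^ (-(1+θ)) := by
      rw [← Real.rpow_add hL0]; ring_nf
    calc (ftil d c n (v n) (w n) (r + k) 0) ^ 2
        = |ftil d c n (v n) (w n) (r + k) 0| ^ 2 := (sq_abs _).symm
      _ ≤ (B * S * ((r+k:ℕ):ℝ) ^ (-((1+θ)/2))) ^ 2 := by
          exact pow_le_pow_left₀ (abs_nonneg _) h 2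
      _ = (B*S)^2 * (((r+k:ℕ):ℝ) ^ (-((1+θ)/2)) * ((r+k:ℕ):ℝ) ^ (-((1+θ)/2))) := by ring
      _ = (B*S)^2 * ((r + k : ℕ):ℝ) ^ (-(1+θ)) := by rw [hXX]
  -- sum over r
  have hsum_r : ∀ n k : ℕ, 1 ≤ k →
      ∑' r : ℕ, (ftil d c n (v n) (w n) (r + k) 0) ^ 2 ≤
      (B*S)^2 * (1 + 1/θ) * (k:ℝ) ^ (-θ) := by
    intro n k hk
    have hbase : Summable (fun r : ℕ => ((r + k : ℕ):ℝ) ^ (-(1+θ))) := by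
      have h := Real.summable_nat_rpow.2 (show -(1+θ) < -1 by linarith)
      exact (summable_nat_add_iff (f := fun m : ℕ => (m:ℝ) ^ (-(1+θ))) k).2 h
    have hmaj : Summable (fun r : ℕ => (B*S)^2 * ((r + k : ℕ):ℝ) ^ (-(1+θ))) :=
      hbase.mul_left _
    have hsq_sum : Summable (fun r : ℕ => (ftil d c n (v n) (w n) (r + k) 0) ^ 2) :=
      Summable.of_nonneg_of_le (fun _ => sq_nonneg _) (fun r => hsq n k r hk) hmaj
    calc ∑' r : ℕ, (ftil d c n (v n) (w n) (r + k) 0) ^ 2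
        ≤ ∑' r : ℕ, (B*S)^2 * ((r + k : ℕ):ℝ) ^ (-(1+θ)) :=
          Summable.tsum_le_tsum (fun r => hsq n k r hk) hsq_sum hmaj
      _ = (B*S)^2 * ∑' r : ℕ, ((r + k : ℕ):ℝ) ^ (-(1+θ)) := tsum_mul_left
      _ ≤ (B*S)^2 * ((1 + 1/θ) * (k:ℝ) ^ (-θ)) := by
          have := tail_sum_s1 hθ0 hk
          exact mul_le_mul_of_nonneg_left this (by positivity)
      _ = (B*S)^2 * (1 + 1/θ) * (k:ℝ) ^ (-θ) := by ring
  -- assemble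
  refine ⟨(B*S)^2 * (1 + 1/θ) * (1/(1-θ)), fun n n' hn' => ?_⟩
  have h1θ : (0:ℝ) < 1 - θ := by linarith
  calc ∑ k ∈ Finset.Icc 1 n', ∑' r : ℕ, (ftil d c n (v n) (w n) (r + k) 0) ^ 2
      ≤ ∑ k ∈ Finset.Icc 1 n', (B*S)^2 * (1 + 1/θ) * (k:ℝ) ^ (-θ) := by
        refine Finset.sum_le_sum fun k hk => ?_
        exact hsum_r n k (Finset.mem_Icc.1 hk).1
    _ = (B*S)^2 * (1 + 1/θ) * ∑ k ∈ Finset.Icc 1 n', (k:ℝ) ^ (-θ) := by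
        rw [Finset.mul_sum]
    _ ≤ (B*S)^2 * (1 + 1/θ) * ((1/(1-θ)) * (n':ℝ) ^ (1-θ)) := by
        refine mul_le_mul_of_nonneg_left (sum_pow_le hθ0 (by linarith) n') (by positivity)
    _ = (B*S)^2 * (1 + 1/θ) * (1/(1-θ)) * (n':ℝ) ^ ((1:ℝ)-θ) := by ring

end
end

section
/- Under Assumption (A), for any families of weighting vectors v_n, w_n ∈ ℝ^{d_n} with sup_n ‖v_n‖₁ < ∞ and sup_n ‖w_n‖₁ < ∞, there exists a constant C (depending on the weighting vectors only through their ℓ1-norms) such that for all n' = 1, 2, …: sup_{n ∈ ℕ} Σ_{k=1}^{n'} Σ_{l=0}^∞ ( f̃_{l,k}^{(n)}(v_n,w_n) )² ≤ C (n')^{1−θ}. -/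
open MeasureTheory Filter Finset

noncomputable section

namespace Stmt2Aux

lemma bern {r : ℝ} (hr0 : 0 ≤ r) (hr1 : r ≤ 1) {m : ℕ} (hm : 1 ≤ m) :
    ((m - 1 : ℕ) : ℝ) ^ r ≤ (m : ℝ) ^ r - r * (m : ℝ) ^ (r - 1) := by
  have hm0 : (0:ℝ) < m := by exact_mod_cast hm
  have hle : 1/(m:ℝ) ≤ 1 := by
    rw [div_le_one hm0]; exact_mod_cast hm
  have hs : (-1:ℝ) ≤ -(1/(m:ℝ)) := by linarith
  have h1 : (0:ℝ) ≤ 1 + (-(1/(m:ℝ))) := by linarith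
  have hcast : ((m - 1 : ℕ) : ℝ) = (m:ℝ) * (1 + (-(1/(m:ℝ)))) := by
    have h := Nat.cast_sub (R := ℝ) hm
    rw [h]
    push_cast
    rw [mul_add, mul_one, mul_neg, mul_one_div, div_self hm0.ne']
    ring
  calc ((m - 1 : ℕ) : ℝ) ^ r = ((m:ℝ))^r * (1 + (-(1/(m:ℝ))))^r := by
        rw [hcast, Real.mul_rpow hm0.le h1]
    _ ≤ (m:ℝ)^r * (1 + r * (-(1/(m:ℝ)))) :=
        mul_le_mul_of_nonneg_left (rpow_one_add_le_one_add_mul_self hs hr0 hr1)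
          (Real.rpow_nonneg hm0.le r)
    _ = (m:ℝ)^r - r * (m:ℝ)^(r-1) := by
        rw [Real.rpow_sub_one hm0.ne']
        field_simp; ring

lemma step_ineq {r : ℝ} (hr0 : 0 < r) (hr1 : r ≤ 1) {m : ℕ} (hm : 2 ≤ m) :
    (m:ℝ) ^ (-(1+r)) ≤ (1/r) * (((m - 1 : ℕ):ℝ) ^ (-r) - (m:ℝ) ^ (-r)) := by
  have hx1 : (1:ℝ) ≤ ((m-1:ℕ):ℝ) := by exact_mod_cast (by omega : 1 ≤ m - 1)
  have hx0 : (0:ℝ) < ((m-1:ℕ):ℝ) := lt_of_lt_of_le zero_lt_one hx1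
  have hm0 : (0:ℝ) < (m:ℝ) := by exact_mod_cast (by omega : 0 < m)
  have hxy : ((m-1:ℕ):ℝ) ≤ (m:ℝ) := by exact_mod_cast (by omega : m - 1 ≤ m)
  have hb := bern hr0.le hr1 (m := m) (by omega)
  have h2 : r * (m:ℝ)^(r-1) ≤ (m:ℝ)^r - ((m-1:ℕ):ℝ)^r := by linarith
  have hxr : ((m-1:ℕ):ℝ)^r ≤ (m:ℝ)^r := Real.rpow_le_rpow hx0.le hxy hr0.le
  have hxrpos : 0 < ((m-1:ℕ):ℝ)^r := Real.rpow_pos_of_pos hx0 r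
  have hmrpos : 0 < (m:ℝ)^r := Real.rpow_pos_of_pos hm0 r
  have hdiff : ((m-1:ℕ):ℝ)^(-r) - (m:ℝ)^(-r)
      = ((m:ℝ)^r - ((m-1:ℕ):ℝ)^r) / (((m-1:ℕ):ℝ)^r * (m:ℝ)^r) := by
    rw [Real.rpow_neg hx0.le, Real.rpow_neg hm0.le, inv_sub_inv hxrpos.ne' hmrpos.ne']
  have hpow : (m:ℝ)^(-(1+r)) * ((m:ℝ)^r * (m:ℝ)^r) = (m:ℝ)^(r-1) := by
    rw [← Real.rpow_add hm0, ← Real.rpow_add hm0]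
    congr 1
    ring
  have hlhs : r * (m:ℝ)^(-(1+r)) = r * (m:ℝ)^(r-1) / ((m:ℝ)^r * (m:ℝ)^r) := by
    rw [eq_div_iff (by positivity : ((m:ℝ)^r * (m:ℝ)^r) ≠ 0), mul_assoc, hpow]
  have hfrac : r * (m:ℝ)^(r-1) / ((m:ℝ)^r * (m:ℝ)^r)
      ≤ ((m:ℝ)^r - ((m-1:ℕ):ℝ)^r) / (((m-1:ℕ):ℝ)^r * (m:ℝ)^r) := by
    apply div_le_div₀ (by linarith) h2 (by positivity)
    exact mul_le_mul_of_nonneg_right hxr hmrpos.le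
  have hsuff : r * (m:ℝ)^(-(1+r)) ≤ ((m-1:ℕ):ℝ)^(-r) - (m:ℝ)^(-r) := by
    rw [hlhs, hdiff]; exact hfrac
  have : (m:ℝ)^(-(1+r)) = (1/r) * (r * (m:ℝ)^(-(1+r))) := by field_simp
  rw [this]
  exact mul_le_mul_of_nonneg_left hsuff (by positivity)

lemma partial_bound {r : ℝ} (hr0 : 0 < r) (hr1 : r ≤ 1) {k : ℕ} (hk : 1 ≤ k) (N : ℕ) :
    ∑ j ∈ range N, ((k+j:ℕ):ℝ)^(-(1+r)) ≤ (1+1/r) * (k:ℝ)^(-r) := by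
  have hk0 : (0:ℝ) < k := by exact_mod_cast hk
  have hk1 : (1:ℝ) ≤ k := by exact_mod_cast hk
  have main : ∀ N : ℕ, ∑ j ∈ range (N+1), ((k+j:ℕ):ℝ)^(-(1+r))
      ≤ (k:ℝ)^(-(1+r)) + (1/r) * ((k:ℝ)^(-r) - ((k+N:ℕ):ℝ)^(-r)) := by
    intro N
    induction N with
    | zero =>
        rw [Finset.sum_range_one]
        simp only [Nat.add_zero, sub_self, mul_zero, add_zero, le_refl]
    | succ N ih =>
        rw [Finset.sum_range_succ]
        have hstep := step_ineq hr0 hr1 (m := k+N+1) (by omega)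
        have hm1 : (k+N+1-1 : ℕ) = k+N := by omega
        rw [hm1] at hstep
        rw [(by omega : k+(N+1) = k+N+1)]
        calc ∑ j ∈ range (N+1), ((k+j:ℕ):ℝ)^(-(1+r)) + ((k+N+1:ℕ):ℝ)^(-(1+r))
            ≤ ((k:ℝ)^(-(1+r)) + (1/r) * ((k:ℝ)^(-r) - ((k+N:ℕ):ℝ)^(-r)))
              + (1/r) * (((k+N:ℕ):ℝ)^(-r) - ((k+N+1:ℕ):ℝ)^(-r)) := add_le_add ih hstep
          _ = (k:ℝ)^(-(1+r)) + (1/r) * ((k:ℝ)^(-r) - ((k+N+1:ℕ):ℝ)^(-r)) := by ring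
  cases N with
  | zero =>
      simp only [Finset.range_zero, Finset.sum_empty]
      positivity
  | succ N =>
      refine (main N).trans ?_
      have h1 : (k:ℝ)^(-(1+r)) ≤ (k:ℝ)^(-r) :=
        Real.rpow_le_rpow_of_exponent_le hk1 (by linarith)
      have h2 : (0:ℝ) ≤ ((k+N:ℕ):ℝ)^(-r) := Real.rpow_nonneg (Nat.cast_nonneg _) _
      have h3 : (1/r) * ((k:ℝ)^(-r) - ((k+N:ℕ):ℝ)^(-r)) ≤ (1/r) * (k:ℝ)^(-r) :=
        mul_le_mul_of_nonneg_left (by linarith) (by positivity)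
      linarith

lemma summable_tail {r : ℝ} (hr0 : 0 < r) (hr1 : r ≤ 1) {k : ℕ} (hk : 1 ≤ k) :
    Summable (fun j : ℕ => ((k+j:ℕ):ℝ)^(-(1+r))) :=
  summable_of_sum_range_le (fun _ => Real.rpow_nonneg (Nat.cast_nonneg _) _)
    (partial_bound hr0 hr1 hk)

lemma tsum_tail {r : ℝ} (hr0 : 0 < r) (hr1 : r ≤ 1) {k : ℕ} (hk : 1 ≤ k) :
    ∑' j : ℕ, ((k+j:ℕ):ℝ)^(-(1+r)) ≤ (1+1/r) * (k:ℝ)^(-r) :=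
  Real.tsum_le_of_sum_range_le (fun _ => Real.rpow_nonneg (Nat.cast_nonneg _) _)
    (partial_bound hr0 hr1 hk)

lemma sum_pow_le {s : ℝ} (hs0 : 0 < s) (hs1 : s ≤ 1) (n : ℕ) :
    ∑ k ∈ Icc 1 n, (k:ℝ)^(s-1) ≤ (1/s) * (n:ℝ)^s := by
  induction n with
  | zero => simp [Real.zero_rpow hs0.ne']
  | succ n ih =>
      rw [← Finset.insert_Icc_right_eq_Icc_add_one (by omega : 1 ≤ n+1),
        Finset.sum_insert (by simp)]
      have hb := bern hs0.le hs1 (m := n+1) (by omega)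
      have hm1 : (n+1-1:ℕ) = n := rfl
      rw [hm1] at hb
      have h3 : ((n+1:ℕ):ℝ)^(s-1) ≤ (1/s)*(((n+1:ℕ):ℝ)^s - (n:ℝ)^s) := by
        have h4 : s * ((n+1:ℕ):ℝ)^(s-1) ≤ ((n+1:ℕ):ℝ)^s - (n:ℝ)^s := by
          push_cast at hb ⊢; linarith
        have := mul_le_mul_of_nonneg_left h4 (by positivity : (0:ℝ) ≤ 1/s)
        calc ((n+1:ℕ):ℝ)^(s-1) = (1/s)*(s*((n+1:ℕ):ℝ)^(s-1)) := by field_simp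
          _ ≤ (1/s)*(((n+1:ℕ):ℝ)^s - (n:ℝ)^s) := this
      push_cast at h3 ⊢
      linarith

end Stmt2Aux

set_option maxHeartbeats 1000000

/-- bound (Ass3) of the technical lemma. -/
theorem stmt2 (d : ℕ → ℕ) (c : ℕ → ℕ → ℕ → ℝ) (θ : ℝ) (hθ0 : 0 < θ) (hθ : θ < 1 / 2)
    (hA : AssumptionA d c θ) (v w : ℕ → ℕ → ℝ) (Kv Kw : ℝ)
    (hv : ∀ n, ∑ ν ∈ Finset.range (d n), |v n ν| ≤ Kv)
    (hw : ∀ n, ∑ ν ∈ Finset.range (d n), |w n ν| ≤ Kw) :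
    ∃ C : ℝ, ∀ n n' : ℕ, 1 ≤ n' →
      ∑ k ∈ Finset.Icc 1 n', ∑' l : ℕ,
        (ftil d c n (v n) (w n) l k) ^ 2
        ≤ C * (n' : ℝ) ^ ((1 : ℝ) - θ) := by
  obtain ⟨C₀, hC₀, hc2⟩ := hA
  set r₁ : ℝ := 2*θ/3 with hr₁def
  set r₂ : ℝ := 1/2 + θ with hr₂def
  set b : ℝ := 3/4 + θ/2 with hbdef
  have hr₁0 : 0 < r₁ := by rw [hr₁def]; linarith
  have hr₁1 : r₁ ≤ 1 := by rw [hr₁def]; linarith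
  have hr₂0 : 0 < r₂ := by rw [hr₂def]; linarith
  have hr₂1 : r₂ ≤ 1 := by rw [hr₂def]; linarith
  have hb0 : 0 < b := by rw [hbdef]; linarith
  set M : ℝ := 2*C₀*(max Kv 0)*(max Kw 0) with hMdef
  have hM0 : 0 ≤ M := by positivity
  set A : ℝ := M^2*((1+1/r₁)^2 + (1+1/r₂)^2) with hAdef
  have hA0 : 0 ≤ A := by positivity
  set G : ℝ := 2 + 1/r₁ with hGdef
  have hG0 : 0 ≤ G := by positivity
  refine ⟨A*G*(1/(1-(r₁+r₁))), ?_⟩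
  intro n n' hn'
  -- bound on individual coefficients
  have hc : ∀ (j ν : ℕ), ν < d n → |c n ν j| ≤ Real.sqrt C₀ * ((max j 1 : ℕ):ℝ)^(-b) := by
    intro j ν hν
    have h1 := hc2 n j ν hν
    have hX0 : (0:ℝ) ≤ ((max j 1:ℕ):ℝ) := Nat.cast_nonneg _
    rw [← Real.sqrt_sq_eq_abs]
    refine (Real.sqrt_le_sqrt h1).trans_eq ?_
    rw [Real.sqrt_mul hC₀.le, Real.sqrt_eq_rpow (((max j 1:ℕ):ℝ) ^ (-(3 / 2 : ℝ) - θ)),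
      ← Real.rpow_mul hX0]
    congr 1
    rw [hbdef]; ring
  -- bound on fCoef
  have hf : ∀ l j, |fCoef d c n (v n) (w n) l j|
      ≤ M * ((max j 1:ℕ):ℝ)^(-b) * ((max (j+l) 1:ℕ):ℝ)^(-b) := by
    intro l j
    have hX0 : (0:ℝ) ≤ ((max j 1:ℕ):ℝ)^(-b) := Real.rpow_nonneg (Nat.cast_nonneg _) _
    have hY0 : (0:ℝ) ≤ ((max (j+l) 1:ℕ):ℝ)^(-b) := Real.rpow_nonneg (Nat.cast_nonneg _) _
    set X : ℝ := ((max j 1:ℕ):ℝ)^(-b)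
    set Y : ℝ := ((max (j+l) 1:ℕ):ℝ)^(-b)
    have key : ∀ (Z : ℕ → ℕ → ℝ), (∀ ν μ, ν < d n → μ < d n → |Z ν μ| ≤ 2*C₀*(X*Y)) →
        |∑ ν ∈ Finset.range (d n), ∑ μ ∈ Finset.range (d n), v n ν * w n μ * Z ν μ|
          ≤ M * X * Y := by
      intro Z hZ
      calc |∑ ν ∈ Finset.range (d n), ∑ μ ∈ Finset.range (d n), v n ν * w n μ * Z ν μ|
          ≤ ∑ ν ∈ Finset.range (d n), |∑ μ ∈ Finset.range (d n), v n ν * w n μ * Z ν μ| :=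
            Finset.abs_sum_le_sum_abs _ _
        _ ≤ ∑ ν ∈ Finset.range (d n), ∑ μ ∈ Finset.range (d n), |v n ν * w n μ * Z ν μ| :=
            Finset.sum_le_sum (fun ν _ => Finset.abs_sum_le_sum_abs _ _)
        _ ≤ ∑ ν ∈ Finset.range (d n), ∑ μ ∈ Finset.range (d n),
              |v n ν| * (|w n μ| * (2*C₀*(X*Y))) := by
            refine Finset.sum_le_sum (fun ν hν => Finset.sum_le_sum (fun μ hμ => ?_))
            rw [abs_mul, abs_mul, mul_assoc]
            refine mul_le_mul_of_nonneg_left ?_ (abs_nonneg _)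
            exact mul_le_mul_of_nonneg_left
              (hZ ν μ (Finset.mem_range.1 hν) (Finset.mem_range.1 hμ)) (abs_nonneg _)
        _ = (∑ ν ∈ Finset.range (d n), |v n ν|) * ((∑ μ ∈ Finset.range (d n), |w n μ|)
              * (2*C₀*(X*Y))) := by
            rw [Finset.sum_mul]
            refine Finset.sum_congr rfl (fun ν _ => ?_)
            rw [← Finset.mul_sum, ← Finset.sum_mul]
        _ ≤ (max Kv 0) * ((max Kw 0) * (2*C₀*(X*Y))) := by
            have h1 : ∑ ν ∈ Finset.range (d n), |v n ν| ≤ max Kv 0 :=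
              (hv n).trans (le_max_left _ _)
            have h2 : ∑ μ ∈ Finset.range (d n), |w n μ| ≤ max Kw 0 :=
              (hw n).trans (le_max_left _ _)
            have h3 : (0:ℝ) ≤ ∑ ν ∈ Finset.range (d n), |v n ν| :=
              Finset.sum_nonneg (fun _ _ => abs_nonneg _)
            have h4 : (0:ℝ) ≤ ∑ μ ∈ Finset.range (d n), |w n μ| :=
              Finset.sum_nonneg (fun _ _ => abs_nonneg _)
            have h5 : (0:ℝ) ≤ 2*C₀*(X*Y) := by positivity
            exact mul_le_mul h1 (mul_le_mul h2 le_rfl h5 (le_max_right _ _))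
              (by positivity) (le_max_right _ _)
        _ = M * X * Y := by rw [hMdef]; ring
    have hcc : ∀ (j₁ j₂ ν μ : ℕ), ν < d n → μ < d n →
        |c n ν j₁ * c n μ j₂|
          ≤ C₀ * (((max j₁ 1:ℕ):ℝ)^(-b) * ((max j₂ 1:ℕ):ℝ)^(-b)) := by
      intro j₁ j₂ ν μ hν hμ
      rw [abs_mul]
      have := mul_le_mul (hc j₁ ν hν) (hc j₂ μ hμ) (abs_nonneg _)
        (by positivity : (0:ℝ) ≤ Real.sqrt C₀ * ((max j₁ 1:ℕ):ℝ)^(-b))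
      refine this.trans_eq ?_
      rw [show Real.sqrt C₀ * ((max j₁ 1:ℕ):ℝ)^(-b) * (Real.sqrt C₀ * ((max j₂ 1:ℕ):ℝ)^(-b))
          = (Real.sqrt C₀ * Real.sqrt C₀) * (((max j₁ 1:ℕ):ℝ)^(-b) * ((max j₂ 1:ℕ):ℝ)^(-b))
          from by ring, Real.mul_self_sqrt hC₀.le]
    by_cases hl : l = 0
    · subst hl
      rw [fCoef, if_pos rfl]
      refine key _ (fun ν μ hν hμ => ?_)
      have h := hcc j (j+0) ν μ hν hμ
      have hXY : (0:ℝ) ≤ X * Y := mul_nonneg hX0 hY0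
      calc |c n ν j * c n μ (j+0)| ≤ C₀ * (X * Y) := h
        _ ≤ 2*C₀*(X*Y) := by nlinarith
    · rw [fCoef, if_neg hl]
      refine key _ (fun ν μ hν hμ => ?_)
      calc |c n ν j * c n μ (j + l) + c n μ j * c n ν (j + l)|
          ≤ |c n ν j * c n μ (j + l)| + |c n μ j * c n ν (j + l)| := abs_add_le _ _
        _ ≤ C₀ * (X*Y) + C₀ * (X*Y) := add_le_add (hcc j (j+l) ν μ hν hμ) (hcc j (j+l) μ ν hμ hν)
        _ = 2*C₀*(X*Y) := by ring
  -- per-k bound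
  have hkmain : ∀ k : ℕ, 1 ≤ k →
      ∑' l : ℕ, (ftil d c n (v n) (w n) l k)^2 ≤ A*G*(k:ℝ)^(-(r₁+r₁)) := by
    intro k hk
    have hk0 : (0:ℝ) < k := by exact_mod_cast hk
    have hk1 : (1:ℝ) ≤ k := by exact_mod_cast hk
    have hkj0 : ∀ j : ℕ, (0:ℝ) < ((k+j:ℕ):ℝ) := by
      intro j; exact_mod_cast (by omega : 0 < k + j)
    -- domination of fCoef at shifted indices
    have hdom : ∀ l j, |fCoef d c n (v n) (w n) l (k+j)|
        ≤ M * ((k+j:ℕ):ℝ)^(-b) * ((k+j+l:ℕ):ℝ)^(-b) := by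
      intro l j
      have h := hf l (k+j)
      rwa [(by omega : max (k+j) 1 = k+j), (by omega : max (k+j+l) 1 = k+j+l)] at h
    have hdom2 : ∀ l j, M * ((k+j:ℕ):ℝ)^(-b) * ((k+j+l:ℕ):ℝ)^(-b)
        ≤ M * ((k+j:ℕ):ℝ)^(-(1+r₂)) := by
      intro l j
      have h1 : ((k+j+l:ℕ):ℝ)^(-b) ≤ ((k+j:ℕ):ℝ)^(-b) :=
        Real.rpow_le_rpow_of_nonpos (hkj0 j) (by exact_mod_cast (by omega : k+j ≤ k+j+l))
          (by linarith)
      calc M * ((k+j:ℕ):ℝ)^(-b) * ((k+j+l:ℕ):ℝ)^(-b)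
          ≤ M * ((k+j:ℕ):ℝ)^(-b) * ((k+j:ℕ):ℝ)^(-b) :=
            mul_le_mul_of_nonneg_left h1 (by positivity)
        _ = M * ((k+j:ℕ):ℝ)^(-(1+r₂)) := by
            rw [mul_assoc, ← Real.rpow_add (hkj0 j)]
            congr 2
            rw [hbdef, hr₂def]; ring
    have hsumtail₂ : Summable (fun j : ℕ => ((k+j:ℕ):ℝ)^(-(1+r₂))) :=
      Stmt2Aux.summable_tail hr₂0 hr₂1 hk
    have hsum_f : ∀ l, Summable (fun j : ℕ => fCoef d c n (v n) (w n) l (k+j)) := by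
      intro l
      refine Summable.of_norm_bounded (hsumtail₂.mul_left M) (fun j => ?_)
      rw [Real.norm_eq_abs]
      exact (hdom l j).trans (hdom2 l j)
    -- case l = 0
    have habs0 : |ftil d c n (v n) (w n) 0 k| ≤ M*((1+1/r₂)*(k:ℝ)^(-r₂)) := by
      have h1 : |ftil d c n (v n) (w n) 0 k|
          ≤ ∑' j : ℕ, |fCoef d c n (v n) (w n) 0 (k+j)| := by
        simpa [Real.norm_eq_abs, ftil] using norm_tsum_le_tsum_norm ((hsum_f 0).abs.congr
          (fun j => (Real.norm_eq_abs _).symm))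
      refine h1.trans ?_
      calc ∑' j : ℕ, |fCoef d c n (v n) (w n) 0 (k+j)|
          ≤ ∑' j : ℕ, M * ((k+j:ℕ):ℝ)^(-(1+r₂)) :=
            Summable.tsum_le_tsum (fun j => (hdom 0 j).trans (hdom2 0 j)) (hsum_f 0).abs
              (hsumtail₂.mul_left M)
        _ = M * ∑' j : ℕ, ((k+j:ℕ):ℝ)^(-(1+r₂)) := tsum_mul_left
        _ ≤ M * ((1+1/r₂)*(k:ℝ)^(-r₂)) :=
            mul_le_mul_of_nonneg_left (Stmt2Aux.tsum_tail hr₂0 hr₂1 hk) hM0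
    -- case l ≥ 1
    have habs1 : ∀ l : ℕ, l ≠ 0 → |ftil d c n (v n) (w n) l k|
        ≤ M*(l:ℝ)^(-(1+r₁)/2)*((1+1/r₁)*(k:ℝ)^(-r₁)) := by
      intro l hl
      have hl0 : (0:ℝ) < (l:ℝ) := by exact_mod_cast Nat.pos_of_ne_zero hl
      have hdom3 : ∀ j, |fCoef d c n (v n) (w n) l (k+j)|
          ≤ M*(l:ℝ)^(-(1+r₁)/2) * ((k+j:ℕ):ℝ)^(-(1+r₁)) := by
        intro j
        refine (hdom l j).trans ?_
        have hsplit : ((k+j+l:ℕ):ℝ)^(-b)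
            ≤ (l:ℝ)^(-(1+r₁)/2) * ((k+j:ℕ):ℝ)^(-(b/3)) := by
          have he : ((k+j+l:ℕ):ℝ)^(-b)
              = ((k+j+l:ℕ):ℝ)^(-(2*b/3)) * ((k+j+l:ℕ):ℝ)^(-(b/3)) := by
            rw [← Real.rpow_add (by exact_mod_cast (by omega : 0 < k+j+l))]
            congr 1; ring
          rw [he]
          have h1 : ((k+j+l:ℕ):ℝ)^(-(2*b/3)) ≤ (l:ℝ)^(-(2*b/3)) :=
            Real.rpow_le_rpow_of_nonpos hl0 (by exact_mod_cast (by omega : l ≤ k+j+l))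
              (by linarith)
          have h2 : ((k+j+l:ℕ):ℝ)^(-(b/3)) ≤ ((k+j:ℕ):ℝ)^(-(b/3)) :=
            Real.rpow_le_rpow_of_nonpos (hkj0 j) (by exact_mod_cast (by omega : k+j ≤ k+j+l))
              (by linarith)
          have h3 : -(2*b/3) = -(1+r₁)/2 := by rw [hbdef, hr₁def]; ring
          rw [← h3]
          exact mul_le_mul h1 h2 (Real.rpow_nonneg (Nat.cast_nonneg _) _)
            (Real.rpow_nonneg hl0.le _)
        calc M * ((k+j:ℕ):ℝ)^(-b) * ((k+j+l:ℕ):ℝ)^(-b)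
            ≤ M * ((k+j:ℕ):ℝ)^(-b) * ((l:ℝ)^(-(1+r₁)/2) * ((k+j:ℕ):ℝ)^(-(b/3))) :=
              mul_le_mul_of_nonneg_left hsplit (by positivity)
          _ = M*(l:ℝ)^(-(1+r₁)/2) * (((k+j:ℕ):ℝ)^(-b) * ((k+j:ℕ):ℝ)^(-(b/3))) := by ring
          _ = M*(l:ℝ)^(-(1+r₁)/2) * ((k+j:ℕ):ℝ)^(-(1+r₁)) := by
              rw [← Real.rpow_add (hkj0 j)]
              congr 2
              rw [hbdef, hr₁def]; ring
      have hsumtail₁ : Summable (fun j : ℕ => ((k+j:ℕ):ℝ)^(-(1+r₁))) :=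
        Stmt2Aux.summable_tail hr₁0 hr₁1 hk
      have h1 : |ftil d c n (v n) (w n) l k|
          ≤ ∑' j : ℕ, |fCoef d c n (v n) (w n) l (k+j)| := by
        simpa [Real.norm_eq_abs, ftil] using norm_tsum_le_tsum_norm ((hsum_f l).abs.congr
          (fun j => (Real.norm_eq_abs _).symm))
      refine h1.trans ?_
      calc ∑' j : ℕ, |fCoef d c n (v n) (w n) l (k+j)|
          ≤ ∑' j : ℕ, M*(l:ℝ)^(-(1+r₁)/2) * ((k+j:ℕ):ℝ)^(-(1+r₁)) :=
            Summable.tsum_le_tsum hdom3 (hsum_f l).abs (hsumtail₁.mul_left _)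
        _ = M*(l:ℝ)^(-(1+r₁)/2) * ∑' j : ℕ, ((k+j:ℕ):ℝ)^(-(1+r₁)) := tsum_mul_left
        _ ≤ M*(l:ℝ)^(-(1+r₁)/2)*((1+1/r₁)*(k:ℝ)^(-r₁)) :=
            mul_le_mul_of_nonneg_left (Stmt2Aux.tsum_tail hr₁0 hr₁1 hk) (by positivity)
    -- unified square bound
    have hsq : ∀ l : ℕ, (ftil d c n (v n) (w n) l k)^2
        ≤ A * ((max l 1:ℕ):ℝ)^(-(1+r₁)) * (k:ℝ)^(-(r₁+r₁)) := by
      intro l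
      by_cases hl : l = 0
      · subst hl
        have h1 : (ftil d c n (v n) (w n) 0 k)^2 ≤ (M*((1+1/r₂)*(k:ℝ)^(-r₂)))^2 := by
          rw [← sq_abs]
          exact pow_le_pow_left₀ (abs_nonneg _) habs0 2
        refine h1.trans ?_
        have h2 : (M*((1+1/r₂)*(k:ℝ)^(-r₂)))^2
            = M^2*(1+1/r₂)^2 * (k:ℝ)^(-(r₂+r₂)) := by
          rw [show (-(r₂+r₂)) = (-r₂) + (-r₂) from by ring, Real.rpow_add hk0]
          ring
        rw [h2]
        have h3 : (k:ℝ)^(-(r₂+r₂)) ≤ (k:ℝ)^(-(r₁+r₁)) :=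
          Real.rpow_le_rpow_of_exponent_le hk1
            (by rw [hr₁def, hr₂def]; linarith)
        have h4 : ((max 0 1:ℕ):ℝ)^(-(1+r₁)) = 1 := by
          norm_num
        rw [h4, mul_one]
        have h5 : M^2*(1+1/r₂)^2 ≤ A := by
          have hx : (0:ℝ) ≤ M^2*(1+1/r₁)^2 := by positivity
          rw [hAdef, mul_add]
          linarith
        have h6 : (0:ℝ) ≤ (k:ℝ)^(-(r₂+r₂)) := Real.rpow_nonneg hk0.le _
        calc M^2*(1+1/r₂)^2 * (k:ℝ)^(-(r₂+r₂)) ≤ A * (k:ℝ)^(-(r₂+r₂)) :=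
              mul_le_mul_of_nonneg_right h5 h6
          _ ≤ A * (k:ℝ)^(-(r₁+r₁)) := mul_le_mul_of_nonneg_left h3 hA0
      · have hl0 : (0:ℝ) < (l:ℝ) := by exact_mod_cast Nat.pos_of_ne_zero hl
        have h1 : (ftil d c n (v n) (w n) l k)^2
            ≤ (M*(l:ℝ)^(-(1+r₁)/2)*((1+1/r₁)*(k:ℝ)^(-r₁)))^2 := by
          rw [← sq_abs]
          exact pow_le_pow_left₀ (abs_nonneg _) (habs1 l hl) 2
        refine h1.trans ?_
        have h2 : (M*(l:ℝ)^(-(1+r₁)/2)*((1+1/r₁)*(k:ℝ)^(-r₁)))^2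
            = M^2*(1+1/r₁)^2 * (l:ℝ)^(-(1+r₁)) * (k:ℝ)^(-(r₁+r₁)) := by
          rw [show (-(1+r₁)) = (-(1+r₁)/2) + (-(1+r₁)/2) from by ring, Real.rpow_add hl0,
            show (-(r₁+r₁)) = (-r₁) + (-r₁) from by ring, Real.rpow_add hk0]
          ring
        rw [h2, (by omega : max l 1 = l)]
        have h5 : M^2*(1+1/r₁)^2 ≤ A := by
          have hx : (0:ℝ) ≤ M^2*(1+1/r₂)^2 := by positivity
          rw [hAdef, mul_add]
          linarith
        have h6 : (0:ℝ) ≤ (l:ℝ)^(-(1+r₁)) := Real.rpow_nonneg hl0.le _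
        have h7 : (0:ℝ) ≤ (k:ℝ)^(-(r₁+r₁)) := Real.rpow_nonneg hk0.le _
        exact mul_le_mul_of_nonneg_right
          (mul_le_mul_of_nonneg_right h5 h6) h7
    -- summability of the bound in l
    have hg₁ : Summable (fun l : ℕ => ((max l 1:ℕ):ℝ)^(-(1+r₁))) := by
      rw [← summable_nat_add_iff 1]
      refine (Stmt2Aux.summable_tail hr₁0 hr₁1 (le_refl 1)).congr (fun l => ?_)
      rw [(by omega : max (l+1) 1 = l+1), (by omega : 1 + l = l + 1)]
    have hg₁sum : ∑' l : ℕ, ((max l 1:ℕ):ℝ)^(-(1+r₁)) ≤ G := by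
      rw [Summable.tsum_eq_zero_add hg₁]
      have h0 : ((max 0 1:ℕ):ℝ)^(-(1+r₁)) = 1 := by norm_num
      rw [h0]
      have h1 : ∑' l : ℕ, ((max (l+1) 1:ℕ):ℝ)^(-(1+r₁))
          = ∑' l : ℕ, ((1+l:ℕ):ℝ)^(-(1+r₁)) := by
        refine tsum_congr (fun l => ?_)
        rw [(by omega : max (l+1) 1 = l+1), (by omega : 1 + l = l + 1)]
      rw [h1]
      have h2 := Stmt2Aux.tsum_tail hr₁0 hr₁1 (le_refl 1)
      rw [Nat.cast_one, Real.one_rpow, mul_one] at h2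
      rw [hGdef]
      linarith
    have hbound_sum : Summable (fun l : ℕ => A * ((max l 1:ℕ):ℝ)^(-(1+r₁)) * (k:ℝ)^(-(r₁+r₁))) := by
      have := (hg₁.mul_left A).mul_right ((k:ℝ)^(-(r₁+r₁)))
      exact this.congr (fun l => by ring)
    have hsq_sum : Summable (fun l : ℕ => (ftil d c n (v n) (w n) l k)^2) :=
      Summable.of_nonneg_of_le (fun l => sq_nonneg _) hsq hbound_sum
    calc ∑' l : ℕ, (ftil d c n (v n) (w n) l k)^2
        ≤ ∑' l : ℕ, A * ((max l 1:ℕ):ℝ)^(-(1+r₁)) * (k:ℝ)^(-(r₁+r₁)) :=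
          Summable.tsum_le_tsum hsq hsq_sum hbound_sum
      _ = (A * (k:ℝ)^(-(r₁+r₁))) * ∑' l : ℕ, ((max l 1:ℕ):ℝ)^(-(1+r₁)) := by
          rw [← tsum_mul_left]
          exact tsum_congr (fun l => by ring)
      _ ≤ (A * (k:ℝ)^(-(r₁+r₁))) * G :=
          mul_le_mul_of_nonneg_left hg₁sum (by positivity)
      _ = A*G*(k:ℝ)^(-(r₁+r₁)) := by ring
  -- sum over k
  have hs0 : 0 < 1-(r₁+r₁) := by rw [hr₁def]; linarith
  have hs1 : 1-(r₁+r₁) ≤ 1 := by rw [hr₁def]; linarith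
  have hn'1 : (1:ℝ) ≤ (n':ℝ) := by exact_mod_cast hn'
  calc ∑ k ∈ Finset.Icc 1 n', ∑' l : ℕ, (ftil d c n (v n) (w n) l k) ^ 2
      ≤ ∑ k ∈ Finset.Icc 1 n', A*G*(k:ℝ)^(-(r₁+r₁)) :=
        Finset.sum_le_sum (fun k hk => hkmain k (Finset.mem_Icc.1 hk).1)
    _ = A*G * ∑ k ∈ Finset.Icc 1 n', (k:ℝ)^((1-(r₁+r₁))-1) := by
        rw [Finset.mul_sum]
        exact Finset.sum_congr rfl (fun k _ => by rw [show (1-(r₁+r₁))-1 = -(r₁+r₁) from by ring])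
    _ ≤ A*G * ((1/(1-(r₁+r₁))) * (n':ℝ)^(1-(r₁+r₁))) :=
        mul_le_mul_of_nonneg_left (Stmt2Aux.sum_pow_le hs0 hs1 n') (by positivity)
    _ ≤ A*G * ((1/(1-(r₁+r₁))) * (n':ℝ)^((1:ℝ)-θ)) := by
        refine mul_le_mul_of_nonneg_left (mul_le_mul_of_nonneg_left ?_ (by positivity))
          (by positivity)
        exact Real.rpow_le_rpow_of_exponent_le hn'1 (by rw [hr₁def]; linarith)
    _ = A*G*(1/(1-(r₁+r₁))) * (n':ℝ)^((1:ℝ)-θ) := by ring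


end
end

section
/- (Remark: explicit asymptotic variance and covariance under stationary moments) Suppose in addition to Assumption (A) that the innovation moments are stationary up to order four, i.e. γ_k = γ and σ_k² = σ² for all k. Then for weighting vectors v_n, w_n, ṽ_n, w̃_n with uniformly bounded ℓ1-norms the series α_n²(v_n,w_n) = (γ − σ⁴) ( f̃_{0,0}^{(n)}(v_n,w_n) )² + σ⁴ Σ_{l=1}^∞ ( f̃_{l,0}^{(n)}(v_n,w_n) )² and β_n(v_n,w_n,ṽ_n,w̃_n) = (γ − σ⁴) f̃_{0,0}^{(n)}(v_n,w_n) f̃_{0,0}^{(n)}(ṽ_n,w̃_n) + σ⁴ Σ_{l=1}^∞ f̃_{l,0}^{(n)}(v_n,w_n) f̃_{l,0}^{(n)}(ṽ_n,w̃_n) converge, are bounded uniformly in n, and these choices satisfy the defining approximation bounds (Ass4) and (Ass5) of the technical lemma, i.e. | ( f̃_{0,0}^{(n)} )² n'(γ − σ⁴) + σ⁴ Σ_{j=1}^{n'} Σ_{l=1}^{j−1} ( f̃_{j−l,0}^{(n)} )² − n' α_n² | ≤ C (n')^{1−θ} for all n' (and the analogous bound for β_n), with C depending on the weighting vectors only through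 their ℓ1-norms. -/
open MeasureTheory ProbabilityTheory Filter Finset

noncomputable section

section Aux

lemma step_ineq {p : ℝ} (hp0 : 0 < p) (hp1 : p < 1) (N : ℕ) :
    (N:ℝ) ^ (1-p) + (1-p) * ((N:ℝ)+1) ^ (-p) ≤ ((N:ℝ)+1) ^ (1-p) := by
  have hN1 : (0:ℝ) < (N:ℝ) + 1 := by positivity
  have hs : (-1:ℝ) ≤ -(1/((N:ℝ)+1)) := by
    rw [neg_le_neg_iff]
    exact div_le_one_of_le₀ (by linarith) hN1.le
  have hB := rpow_one_add_le_one_add_mul_self hs (p := 1-p) (by linarith) (by linarith)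
  have h1 : (1:ℝ) + -(1/((N:ℝ)+1)) = (N:ℝ)/((N:ℝ)+1) := by field_simp; ring
  rw [h1] at hB
  have hmul := mul_le_mul_of_nonneg_left hB (Real.rpow_nonneg hN1.le (1-p))
  have hL : ((N:ℝ)+1) ^ (1-p) * ((N:ℝ)/((N:ℝ)+1)) ^ (1-p) = (N:ℝ) ^ (1-p) := by
    rw [← Real.mul_rpow hN1.le (by positivity)]
    congr 1
    field_simp
  have h3 : ((N:ℝ)+1) ^ (1-p) = ((N:ℝ)+1) ^ (-p) * ((N:ℝ)+1) := by
    rw [show (1-p) = -p + 1 by ring, Real.rpow_add hN1, Real.rpow_one]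
  have hR : ((N:ℝ)+1) ^ (1-p) * (1 + (1-p) * -(1/((N:ℝ)+1)))
      = ((N:ℝ)+1) ^ (1-p) - (1-p) * ((N:ℝ)+1) ^ (-p) := by
    field_simp
    linear_combination (p-1) * h3
  rw [hL, hR] at hmul
  linarith

lemma partial_sum_le {p : ℝ} (hp0 : 0 < p) (hp1 : p < 1) (N : ℕ) :
    ∑ j ∈ Icc 1 N, (j:ℝ) ^ (-p) ≤ (1/(1-p)) * (N:ℝ) ^ (1-p) := by
  induction N with
  | zero => simp [Real.zero_rpow (by linarith : (1:ℝ)-p ≠ 0)]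
  | succ N ih =>
      rw [Finset.sum_Icc_succ_top (by omega)]
      have hst := step_ineq hp0 hp1 N
      have h1p : (0:ℝ) < 1 - p := by linarith
      have hc : ((N+1:ℕ):ℝ) = (N:ℝ)+1 := by push_cast; ring
      rw [hc]
      rw [div_mul_eq_mul_div, le_div_iff₀ h1p] at ih ⊢
      nlinarith [Real.rpow_nonneg (show (0:ℝ) ≤ (N:ℝ)+1 by positivity) (-p)]

lemma tail_step_s17 {q : ℝ} (hq1 : 1 < q) (hq2 : q < 2) (a : ℕ) (ha : 1 ≤ a) :
    (q-1) * ((a:ℝ)+1) ^ (-q) ≤ (a:ℝ) ^ (1-q) - ((a:ℝ)+1) ^ (1-q) := by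
  set r : ℝ := q - 1 with hr
  have hr0 : 0 < r := by simp only [hr]; linarith
  have hr1 : r < 1 := by simp only [hr]; linarith
  have ha0 : (0:ℝ) < (a:ℝ) := by exact_mod_cast ha
  have hb0 : (0:ℝ) < (a:ℝ)+1 := by linarith
  set b : ℝ := (a:ℝ)+1 with hbdef
  have hs : (-1:ℝ) ≤ -(1/b) := by
    rw [neg_le_neg_iff]; exact div_le_one_of_le₀ (by linarith) hb0.le
  have hB := rpow_one_add_le_one_add_mul_self hs (p := r) hr0.le hr1.le
  have h1 : (1:ℝ) + -(1/b) = (a:ℝ)/b := by field_simp [hbdef]; rw [hbdef]; ring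
  rw [h1] at hB
  have hmul := mul_le_mul_of_nonneg_left hB (Real.rpow_nonneg hb0.le r)
  have hL : b ^ r * ((a:ℝ)/b) ^ r = (a:ℝ) ^ r := by
    rw [← Real.mul_rpow hb0.le (by positivity)]
    congr 1; field_simp
  rw [hL] at hmul
  have hx : r/b < 1 := by rw [div_lt_one hb0]; linarith
  have hxpos : 0 < 1 - r/b := by linarith
  have hx0 : 0 < r/b := div_pos hr0 hb0
  have harpos : (0:ℝ) < (a:ℝ) ^ r := Real.rpow_pos_of_pos ha0 r
  have hbrpos : (0:ℝ) < b ^ r := Real.rpow_pos_of_pos hb0 r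
  have hmul' : (a:ℝ) ^ r ≤ b ^ r * (1 - r/b) := by
    have h2 : (1:ℝ) + r * -(1/b) = 1 - r/b := by ring
    rwa [h2] at hmul
  have hinv : (b ^ r * (1 - r/b))⁻¹ ≤ ((a:ℝ) ^ r)⁻¹ := inv_anti₀ harpos hmul'
  have h2 : (1 + r/b) * (1 - r/b) ≤ 1 := by nlinarith
  have h3 : 1 + r/b ≤ (1 - r/b)⁻¹ := by
    have hinv1 : (1 - r/b) * (1 - r/b)⁻¹ = 1 := mul_inv_cancel₀ hxpos.ne'
    nlinarith [inv_pos.2 hxpos, hinv1]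
  have h4 : (b ^ r)⁻¹ * (1 + r/b) ≤ ((a:ℝ) ^ r)⁻¹ := by
    calc (b ^ r)⁻¹ * (1 + r/b) ≤ (b ^ r)⁻¹ * (1 - r/b)⁻¹ :=
          mul_le_mul_of_nonneg_left h3 (inv_nonneg.2 hbrpos.le)
    _ = (b ^ r * (1 - r/b))⁻¹ := (mul_inv _ _).symm
    _ ≤ ((a:ℝ) ^ r)⁻¹ := hinv
  have hra : (a:ℝ) ^ (1-q) = ((a:ℝ) ^ r)⁻¹ := by
    rw [show (1-q) = -r by rw [hr]; ring, Real.rpow_neg ha0.le]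
  have hrb : b ^ (1-q) = (b ^ r)⁻¹ := by
    rw [show (1-q) = -r by rw [hr]; ring, Real.rpow_neg hb0.le]
  have hbq : b ^ (-q) = (b ^ r)⁻¹ * b⁻¹ := by
    rw [show (-q) = -r + (-1) by rw [hr]; ring, Real.rpow_add hb0, Real.rpow_neg_one,
      Real.rpow_neg hb0.le]
  rw [hra, hrb, hbq]
  have hexp : (b ^ r)⁻¹ * (1 + r/b) = (b ^ r)⁻¹ + r * ((b ^ r)⁻¹ * b⁻¹) := by
    field_simp
  rw [hexp] at h4
  linarith

lemma tail_summable {q : ℝ} (hq1 : 1 < q) (j : ℕ) :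
    Summable (fun m : ℕ => ((j:ℝ)+(m:ℝ)) ^ (-q)) := by
  have h := (summable_nat_add_iff (f := fun m : ℕ => ((m:ℕ):ℝ) ^ (-q)) j).2
    (Real.summable_nat_rpow.2 (by linarith))
  refine h.congr fun m => ?_
  push_cast
  ring_nf

lemma tail_sum_le {q : ℝ} (hq1 : 1 < q) (hq2 : q < 2) (j : ℕ) (hj : 1 ≤ j) :
    ∑' m : ℕ, ((j:ℝ)+(m:ℝ)) ^ (-q) ≤ (1 + 1/(q-1)) * (j:ℝ) ^ (1-q) := by
  have hj0 : (0:ℝ) < (j:ℝ) := by exact_mod_cast hj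
  have hq1' : (0:ℝ) < q - 1 := by linarith
  apply Summable.tsum_le_of_sum_range_le (tail_summable hq1 j)
  intro M
  have hhead : ((j:ℝ)+((0:ℕ):ℝ)) ^ (-q) ≤ (j:ℝ) ^ (1-q) := by
    rw [Nat.cast_zero, add_zero]
    exact Real.rpow_le_rpow_of_exponent_le (by exact_mod_cast hj) (by linarith)
  have htel : ∀ M', ∑ m ∈ Finset.range M', (((j+m+1:ℕ)):ℝ) ^ (-q)
      ≤ (1/(q-1)) * (j:ℝ) ^ (1-q) := by
    intro M'
    have hstep : ∀ m : ℕ, (((j+m+1:ℕ)):ℝ) ^ (-q)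
        ≤ (1/(q-1)) * ((((j+m:ℕ)):ℝ) ^ (1-q) - (((j+m+1:ℕ)):ℝ) ^ (1-q)) := by
      intro m
      have h := tail_step_s17 hq1 hq2 (j+m) (by omega)
      have hc : ((j+m:ℕ):ℝ) + 1 = ((j+m+1:ℕ):ℝ) := by push_cast; ring
      rw [hc] at h
      rw [div_mul_eq_mul_div, le_div_iff₀ hq1', one_mul]
      nlinarith [h]
    calc ∑ m ∈ Finset.range M', (((j+m+1:ℕ)):ℝ) ^ (-q)
        ≤ ∑ m ∈ Finset.range M',
            (1/(q-1)) * ((((j+m:ℕ)):ℝ) ^ (1-q) - (((j+m+1:ℕ)):ℝ) ^ (1-q)) :=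
          Finset.sum_le_sum fun m _ => hstep m
    _ = (1/(q-1)) * ((((j+0:ℕ)):ℝ) ^ (1-q) - (((j+M':ℕ)):ℝ) ^ (1-q)) := by
          rw [← Finset.mul_sum,
            ← Finset.sum_range_sub' (fun m : ℕ => (((j+m:ℕ)):ℝ) ^ (1-q)) M']
          rfl
    _ ≤ (1/(q-1)) * (j:ℝ) ^ (1-q) := by
          apply mul_le_mul_of_nonneg_left _ (by positivity)
          have h1 : (0:ℝ) ≤ (((j+M':ℕ)):ℝ) ^ (1-q) := Real.rpow_nonneg (by positivity) _
          have h2 : ((j+0:ℕ):ℝ) = (j:ℝ) := by norm_num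
          rw [h2]
          linarith
  cases M with
  | zero => simp; positivity
  | succ M' =>
      rw [Finset.sum_range_succ' (fun m : ℕ => ((j:ℝ)+(m:ℝ)) ^ (-q)) M']
      have h1 := htel M'
      have h2 : ∑ m ∈ Finset.range M', ((j:ℝ)+((m:ℕ)+1:ℝ)) ^ (-q)
          = ∑ m ∈ Finset.range M', (((j+m+1:ℕ)):ℝ) ^ (-q) := by
        apply Finset.sum_congr rfl; intro m _; push_cast; ring_nf
      simp only [Nat.cast_add, Nat.cast_one]
      rw [h2]
      have hx : (1 + 1/(q-1)) * (j:ℝ)^(1-q) = (j:ℝ)^(1-q) + 1/(q-1)*(j:ℝ)^(1-q) := by ring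
      push_cast [add_zero] at hhead h1 ⊢
      linarith
/-- auxiliary decay function -/
def gq (θ : ℝ) (j : ℕ) : ℝ := ((max j 1 : ℕ):ℝ) ^ (-((3/2+θ)/2))

lemma gq_nonneg (θ : ℝ) (j : ℕ) : 0 ≤ gq θ j := Real.rpow_nonneg (by positivity) _

lemma gq_base_pos (j : ℕ) : (0:ℝ) < ((max j 1 : ℕ):ℝ) := by
  have : 1 ≤ max j 1 := le_max_right _ _
  exact_mod_cast Nat.lt_of_lt_of_le Nat.zero_lt_one this

lemma gq_anti {θ : ℝ} (hθ0 : 0 < θ) {j j' : ℕ} (h : j ≤ j') : gq θ j' ≤ gq θ j := by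
  unfold gq
  apply Real.rpow_le_rpow_of_nonpos (gq_base_pos j)
  · exact_mod_cast Nat.cast_le.2 (max_le_max h (le_refl 1))
  · linarith

lemma gq_mul_self (θ : ℝ) (j : ℕ) :
    gq θ j * gq θ j = ((max j 1 : ℕ):ℝ) ^ (-(3/2+θ)) := by
  unfold gq
  rw [← Real.rpow_add (gq_base_pos j)]
  congr 1
  ring

lemma gq_of_pos {θ : ℝ} {j : ℕ} (hj : 1 ≤ j) : gq θ j = (j:ℝ) ^ (-((3/2+θ)/2)) := by
  unfold gq
  congr 2
  omega

lemma gq_zero (θ : ℝ) : gq θ 0 = 1 := by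
  unfold gq
  norm_num

lemma summable_gq_sq {θ : ℝ} (hθ0 : 0 < θ) :
    Summable (fun j : ℕ => ((max j 1 : ℕ):ℝ) ^ (-(3/2+θ))) := by
  rw [← summable_nat_add_iff 1]
  have hs : Summable (fun j : ℕ => ((j:ℕ):ℝ) ^ (-(3/2+θ))) :=
    Real.summable_nat_rpow.2 (by linarith)
  have := (summable_nat_add_iff 1).2 hs
  refine this.congr fun j => ?_
  congr 2
  omega

lemma summable_gq_mul {θ : ℝ} (hθ0 : 0 < θ) (l : ℕ) :
    Summable (fun j : ℕ => gq θ j * gq θ (j + l)) := by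
  apply Summable.of_nonneg_of_le
    (fun j => mul_nonneg (gq_nonneg θ j) (gq_nonneg θ _))
    (fun j => ?_) (summable_gq_sq hθ0)
  calc gq θ j * gq θ (j+l) ≤ gq θ j * gq θ j :=
        mul_le_mul_of_nonneg_left (gq_anti hθ0 (Nat.le_add_right j l)) (gq_nonneg θ j)
  _ = ((max j 1 : ℕ):ℝ) ^ (-(3/2+θ)) := gq_mul_self θ j

/-- constants -/
def S0c (θ : ℝ) : ℝ := ∑' j : ℕ, ((max j 1 : ℕ):ℝ) ^ (-(3/2+θ))
def Cgc (θ : ℝ) : ℝ := (1 + 1/(1-(3/2+θ)/2)) + (1 + 1/((3/2+θ)-1))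

lemma S0c_nonneg (θ : ℝ) : 0 ≤ S0c θ :=
  tsum_nonneg fun j => Real.rpow_nonneg (by positivity) _

lemma Cgc_nonneg {θ : ℝ} (hθ0 : 0 < θ) (hθ : θ < 1/2) : 0 ≤ Cgc θ := by
  unfold Cgc
  have h1 : (0:ℝ) < 1-(3/2+θ)/2 := by linarith
  have h2 : (0:ℝ) < (3/2+θ)-1 := by linarith
  positivity

lemma tsum_gq_mul_le_S0c {θ : ℝ} (hθ0 : 0 < θ) (l : ℕ) :
    ∑' j : ℕ, gq θ j * gq θ (j + l) ≤ S0c θ := by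
  apply Summable.tsum_le_tsum _ (summable_gq_mul hθ0 l) (summable_gq_sq hθ0)
  intro j
  calc gq θ j * gq θ (j+l) ≤ gq θ j * gq θ j :=
        mul_le_mul_of_nonneg_left (gq_anti hθ0 (Nat.le_add_right j l)) (gq_nonneg θ j)
  _ = ((max j 1 : ℕ):ℝ) ^ (-(3/2+θ)) := gq_mul_self θ j

lemma sum_Icc1_eq_range (F : ℕ → ℝ) (k : ℕ) :
    ∑ l ∈ Icc 1 k, F l = ∑ i ∈ range k, F (i+1) := by
  refine Finset.sum_nbij' (fun l => l - 1) (fun i => i + 1) ?_ ?_ ?_ ?_ ?_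
  · intro a ha; simp only [Finset.mem_Icc] at ha; simp only [Finset.mem_range]; omega
  · intro a ha; simp only [Finset.mem_range] at ha; simp only [Finset.mem_Icc]; omega
  · intro a ha; simp only [Finset.mem_Icc] at ha; omega
  · intro a _; omega
  · intro a ha; simp only [Finset.mem_Icc] at ha; congr 1; omega

/-- key convolution bound -/
lemma tsum_gq_mul_le {θ : ℝ} (hθ0 : 0 < θ) (hθ : θ < 1/2) (l : ℕ) (hl : 1 ≤ l) :
    ∑' j : ℕ, gq θ j * gq θ (j + l) ≤ Cgc θ * (l:ℝ) ^ (1-(3/2+θ)) := by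
  set q : ℝ := 3/2 + θ with hq
  have hq1 : 1 < q := by rw [hq]; linarith
  have hq2 : q < 2 := by rw [hq]; linarith
  have hl0 : (0:ℝ) < (l:ℝ) := by exact_mod_cast hl
  have hsum := summable_gq_mul hθ0 l
  rw [← Summable.sum_add_tsum_nat_add l hsum]
  have hpart1 : ∑ j ∈ range l, gq θ j * gq θ (j + l)
      ≤ (1 + 1/(1-q/2)) * (l:ℝ) ^ (1-q) := by
    have hstep : ∑ j ∈ range l, gq θ j * gq θ (j + l) ≤ (∑ j ∈ range l, gq θ j) * gq θ l := by
      rw [Finset.sum_mul]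
      apply Finset.sum_le_sum
      intro j _
      exact mul_le_mul_of_nonneg_left (gq_anti hθ0 (Nat.le_add_left l j)) (gq_nonneg θ j)
    have hsum2 : ∑ j ∈ range l, gq θ j ≤ (1 + 1/(1-q/2)) * (l:ℝ) ^ (1-q/2) := by
      have hdecomp : ∑ j ∈ range l, gq θ j = gq θ 0 + ∑ i ∈ range (l-1), gq θ (i+1) := by
        cases l with
        | zero => omega
        | succ k =>
            rw [Finset.sum_range_succ' (gq θ) k]
            simp [add_comm]
      rw [hdecomp, ← sum_Icc1_eq_range (gq θ) (l-1), gq_zero]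
      have hIcc : ∑ m ∈ Icc 1 (l-1), gq θ m = ∑ m ∈ Icc 1 (l-1), (m:ℝ) ^ (-(q/2)) := by
        apply Finset.sum_congr rfl
        intro m hm
        simp only [Finset.mem_Icc] at hm
        rw [gq_of_pos hm.1, hq]
      rw [hIcc]
      have h1 := partial_sum_le (p := q/2) (by rw [hq]; linarith) (by rw [hq]; linarith) (l-1)
      have h2 : ((l-1:ℕ):ℝ) ^ (1-q/2) ≤ (l:ℝ) ^ (1-q/2) := by
        apply Real.rpow_le_rpow (by positivity) _ (by rw [hq]; linarith)
        exact_mod_cast Nat.sub_le l 1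
      have h3 : (1:ℝ) ≤ (l:ℝ) ^ (1-q/2) := by
        calc (1:ℝ) = (1:ℝ) ^ (1-q/2) := (Real.one_rpow _).symm
        _ ≤ (l:ℝ) ^ (1-q/2) := Real.rpow_le_rpow zero_le_one (by exact_mod_cast hl) (by rw [hq]; linarith)
      have h4 : (0:ℝ) < 1 - q/2 := by rw [hq]; linarith
      have h5 : (0:ℝ) ≤ 1/(1-q/2) := by positivity
      nlinarith [h1, h2, h3]
    have hgql : gq θ l = (l:ℝ) ^ (-(q/2)) := by rw [gq_of_pos hl, hq]
    calc ∑ j ∈ range l, gq θ j * gq θ (j + l) ≤ (∑ j ∈ range l, gq θ j) * gq θ l := hstep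
    _ ≤ ((1 + 1/(1-q/2)) * (l:ℝ) ^ (1-q/2)) * gq θ l := by
        apply mul_le_mul_of_nonneg_right hsum2 (gq_nonneg θ l)
    _ = (1 + 1/(1-q/2)) * (l:ℝ) ^ (1-q) := by
        rw [hgql, mul_assoc, ← Real.rpow_add hl0,
          show (1-q/2) + -(q/2) = 1-q by ring]
  have hpart2 : ∑' j : ℕ, gq θ (j+l) * gq θ ((j+l) + l)
      ≤ (1 + 1/(q-1)) * (l:ℝ) ^ (1-q) := by
    have hle : ∀ j : ℕ, gq θ (j+l) * gq θ ((j+l)+l) ≤ ((l:ℝ)+(j:ℝ)) ^ (-q) := by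
      intro j
      calc gq θ (j+l) * gq θ ((j+l)+l) ≤ gq θ (j+l) * gq θ (j+l) :=
            mul_le_mul_of_nonneg_left (gq_anti hθ0 (Nat.le_add_right _ l)) (gq_nonneg θ _)
      _ = ((max (j+l) 1 : ℕ):ℝ) ^ (-q) := by rw [gq_mul_self, hq]
      _ = ((l:ℝ)+(j:ℝ)) ^ (-q) := by
            congr 1
            have : max (j+l) 1 = j+l := by omega
            rw [this]
            push_cast
            ring
    calc ∑' j : ℕ, gq θ (j+l) * gq θ ((j+l) + l)
        ≤ ∑' j : ℕ, ((l:ℝ)+(j:ℝ)) ^ (-q) := by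
          have hs2 : Summable (fun j : ℕ => gq θ (j+l) * gq θ ((j+l)+l)) :=
            ((summable_nat_add_iff (f := fun j : ℕ => gq θ j * gq θ (j+l)) l).2
              (summable_gq_mul hθ0 l)).congr (fun j => rfl)
          exact Summable.tsum_le_tsum hle hs2 (tail_summable hq1 l)
    _ ≤ (1 + 1/(q-1)) * (l:ℝ) ^ (1-q) := tail_sum_le hq1 hq2 l hl
  have hCg : Cgc θ = (1 + 1/(1-q/2)) + (1 + 1/(q-1)) := by rw [Cgc, hq]
  rw [hCg, add_mul]
  exact add_le_add hpart1 hpart2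
lemma fCoef_abs_le (d : ℕ → ℕ) (c : ℕ → ℕ → ℕ → ℝ) (n : ℕ) {θ B KV KW : ℝ}
    (hB : 0 ≤ B)
    (hc : ∀ j ν, ν < d n → |c n ν j| ≤ B * gq θ j)
    (V W : ℕ → ℝ)
    (hV : ∑ ν ∈ range (d n), |V ν| ≤ KV) (hW : ∑ ν ∈ range (d n), |W ν| ≤ KW)
    (l j : ℕ) :
    |fCoef d c n V W l j| ≤ 2*KV*KW*B^2 * (gq θ j * gq θ (j + l)) := by
  have hKV0 : 0 ≤ KV := le_trans (Finset.sum_nonneg fun ν _ => abs_nonneg _) hV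
  have hKW0 : 0 ≤ KW := le_trans (Finset.sum_nonneg fun ν _ => abs_nonneg _) hW
  have hg0 : 0 ≤ gq θ j := gq_nonneg θ j
  have hgl0 : 0 ≤ gq θ (j+l) := gq_nonneg θ (j+l)
  have key : ∀ X : ℕ → ℕ → ℝ,
      (∀ ν μ, ν < d n → μ < d n → |X ν μ| ≤ 2*B^2*(gq θ j * gq θ (j+l))) →
      |∑ ν ∈ range (d n), ∑ μ ∈ range (d n), V ν * W μ * X ν μ|
        ≤ 2*KV*KW*B^2 * (gq θ j * gq θ (j + l)) := by
    intro X hX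
    calc |∑ ν ∈ range (d n), ∑ μ ∈ range (d n), V ν * W μ * X ν μ|
        ≤ ∑ ν ∈ range (d n), ∑ μ ∈ range (d n), |V ν * W μ * X ν μ| :=
          (Finset.abs_sum_le_sum_abs _ _).trans
            (Finset.sum_le_sum fun ν _ => Finset.abs_sum_le_sum_abs _ _)
    _ ≤ ∑ ν ∈ range (d n), ∑ μ ∈ range (d n),
          |V ν| * |W μ| * (2*B^2*(gq θ j * gq θ (j+l))) := by
          apply Finset.sum_le_sum
          intro ν hν
          apply Finset.sum_le_sum
          intro μ hμ
          rw [abs_mul, abs_mul]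
          exact mul_le_mul_of_nonneg_left
            (hX ν μ (Finset.mem_range.1 hν) (Finset.mem_range.1 hμ))
            (mul_nonneg (abs_nonneg _) (abs_nonneg _))
    _ = (∑ ν ∈ range (d n), |V ν|) * (∑ μ ∈ range (d n), |W μ|)
          * (2*B^2*(gq θ j * gq θ (j+l))) := by
          rw [Finset.sum_mul_sum, Finset.sum_mul]
          apply Finset.sum_congr rfl
          intro ν _
          rw [Finset.sum_mul]
    _ ≤ KV * KW * (2*B^2*(gq θ j * gq θ (j+l))) := by
          have h2 : (0:ℝ) ≤ 2*B^2*(gq θ j * gq θ (j+l)) := by positivity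
          have hWs : (0:ℝ) ≤ ∑ μ ∈ range (d n), |W μ| :=
            Finset.sum_nonneg fun ν _ => abs_nonneg _
          apply mul_le_mul_of_nonneg_right _ h2
          exact mul_le_mul hV hW hWs hKV0
    _ = 2*KV*KW*B^2 * (gq θ j * gq θ (j + l)) := by ring
  unfold fCoef
  split_ifs with h
  · subst h
    apply key
    intro ν μ hν hμ
    rw [abs_mul]
    have h1 := hc j ν hν
    have h2 := hc j μ hμ
    have : |c n ν j| * |c n μ j| ≤ (B * gq θ j) * (B * gq θ j) :=
      mul_le_mul h1 h2 (abs_nonneg _) (by positivity)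
    calc |c n ν j| * |c n μ j| ≤ (B * gq θ j) * (B * gq θ j) := this
    _ ≤ 2*B^2*(gq θ j * gq θ (j+0)) := by
        rw [Nat.add_zero]
        nlinarith [sq_nonneg (B * gq θ j)]
  · apply key
    intro ν μ hν hμ
    have h1 := hc j ν hν
    have h2 := hc j μ hμ
    have h3 := hc (j+l) ν hν
    have h4 := hc (j+l) μ hμ
    calc |c n ν j * c n μ (j + l) + c n μ j * c n ν (j + l)|
        ≤ |c n ν j * c n μ (j + l)| + |c n μ j * c n ν (j + l)| := abs_add_le _ _
    _ = |c n ν j| * |c n μ (j + l)| + |c n μ j| * |c n ν (j + l)| := by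
        rw [abs_mul, abs_mul]
    _ ≤ (B * gq θ j) * (B * gq θ (j+l)) + (B * gq θ j) * (B * gq θ (j+l)) := by
        apply add_le_add
        · exact mul_le_mul h1 h4 (abs_nonneg _) (by positivity)
        · exact mul_le_mul h2 h3 (abs_nonneg _) (by positivity)
    _ = 2*B^2*(gq θ j * gq θ (j+l)) := by ring

lemma ftil_bounds (d : ℕ → ℕ) (c : ℕ → ℕ → ℕ → ℝ) (n : ℕ) {θ B KV KW : ℝ}
    (hθ0 : 0 < θ) (hθ : θ < 1/2) (hB : 0 ≤ B)
    (hc : ∀ j ν, ν < d n → |c n ν j| ≤ B * gq θ j)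
    (V W : ℕ → ℝ)
    (hV : ∑ ν ∈ range (d n), |V ν| ≤ KV) (hW : ∑ ν ∈ range (d n), |W ν| ≤ KW) :
    (∀ l, |ftil d c n V W l 0| ≤ 2*KV*KW*B^2 * S0c θ) ∧
    (∀ l, 1 ≤ l → |ftil d c n V W l 0|
        ≤ (2*KV*KW*B^2 * Cgc θ) * (l:ℝ) ^ (-(1/2:ℝ)-θ)) := by
  have hKV0 : 0 ≤ KV := le_trans (Finset.sum_nonneg fun ν _ => abs_nonneg _) hV
  have hKW0 : 0 ≤ KW := le_trans (Finset.sum_nonneg fun ν _ => abs_nonneg _) hW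
  set CC : ℝ := 2*KV*KW*B^2 with hCC
  have hCC0 : 0 ≤ CC := by positivity
  have hbd := fCoef_abs_le d c n hB hc V W hV hW
  have hsumabs : ∀ l, Summable (fun j : ℕ => |fCoef d c n V W l j|) := by
    intro l
    apply Summable.of_nonneg_of_le (fun j => abs_nonneg _) (fun j => hbd l j)
    exact (summable_gq_mul hθ0 l).mul_left CC
  have hftil : ∀ l, |ftil d c n V W l 0| ≤ CC * ∑' j : ℕ, gq θ j * gq θ (j + l) := by
    intro l
    have h0 : ftil d c n V W l 0 = ∑' j : ℕ, fCoef d c n V W l j := by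
      simp only [ftil, Nat.zero_add]
    rw [h0]
    calc |∑' j : ℕ, fCoef d c n V W l j| ≤ ∑' j : ℕ, |fCoef d c n V W l j| := by
          have := norm_tsum_le_tsum_norm (f := fun j : ℕ => fCoef d c n V W l j)
            (by simpa [Real.norm_eq_abs] using hsumabs l)
          simpa [Real.norm_eq_abs] using this
    _ ≤ ∑' j : ℕ, CC * (gq θ j * gq θ (j + l)) :=
          Summable.tsum_le_tsum (fun j => hbd l j) (hsumabs l) ((summable_gq_mul hθ0 l).mul_left CC)
    _ = CC * ∑' j : ℕ, gq θ j * gq θ (j + l) := tsum_mul_left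
  constructor
  · intro l
    calc |ftil d c n V W l 0| ≤ CC * ∑' j : ℕ, gq θ j * gq θ (j + l) := hftil l
    _ ≤ CC * S0c θ := mul_le_mul_of_nonneg_left (tsum_gq_mul_le_S0c hθ0 l) hCC0
  · intro l hl
    calc |ftil d c n V W l 0| ≤ CC * ∑' j : ℕ, gq θ j * gq θ (j + l) := hftil l
    _ ≤ CC * (Cgc θ * (l:ℝ) ^ (1-(3/2+θ))) :=
          mul_le_mul_of_nonneg_left (tsum_gq_mul_le hθ0 hθ l hl) hCC0
    _ = (CC * Cgc θ) * (l:ℝ) ^ (-(1/2:ℝ)-θ) := by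
          rw [show (1-(3/2+θ)) = -(1/2:ℝ)-θ by ring, hCC]
          ring
def Tconst (θ : ℝ) : ℝ := ∑' l : ℕ, ((l+1:ℕ):ℝ) ^ (-(1+2*θ))

lemma Tconst_nonneg (θ : ℝ) : 0 ≤ Tconst θ :=
  tsum_nonneg fun l => Real.rpow_nonneg (by positivity) _

lemma Tconst_summable {θ : ℝ} (hθ0 : 0 < θ) :
    Summable (fun l : ℕ => ((l+1:ℕ):ℝ) ^ (-(1+2*θ))) :=
  (summable_nat_add_iff 1).2 (Real.summable_nat_rpow.2 (by linarith))

lemma sum_reflect (F : ℕ → ℝ) (j : ℕ) :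
    ∑ l ∈ Icc 1 (j-1), F (j-l) = ∑ l ∈ Icc 1 (j-1), F l := by
  refine Finset.sum_nbij' (fun l => j - l) (fun l => j - l) ?_ ?_ ?_ ?_ ?_
  · intro a ha; simp only [Finset.mem_Icc] at ha ⊢; omega
  · intro a ha; simp only [Finset.mem_Icc] at ha ⊢; omega
  · intro a ha; simp only [Finset.mem_Icc] at ha; show j - (j - a) = a; omega
  · intro a ha; simp only [Finset.mem_Icc] at ha; show j - (j - a) = a; omega
  · intro a ha; rfl

lemma rpow_half_mul {θ : ℝ} {m : ℕ} (hm : 1 ≤ m) :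
    (m:ℝ) ^ (-(1/2:ℝ)-θ) * (m:ℝ) ^ (-(1/2:ℝ)-θ) = (m:ℝ) ^ (-(1+2*θ)) := by
  have hm0 : (0:ℝ) < (m:ℝ) := by exact_mod_cast hm
  rw [← Real.rpow_add hm0]
  congr 1
  ring

lemma pair_bound {θ E E' : ℝ} (hθ0 : 0 < θ) (hθ : θ < 1/2) (hE : 0 ≤ E) (hE' : 0 ≤ E')
    (φ φ' : ℕ → ℝ)
    (hφ : ∀ l : ℕ, 1 ≤ l → |φ l| ≤ E * (l:ℝ) ^ (-(1/2:ℝ)-θ))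
    (hφ' : ∀ l : ℕ, 1 ≤ l → |φ' l| ≤ E' * (l:ℝ) ^ (-(1/2:ℝ)-θ)) :
    Summable (fun l : ℕ => φ (l+1) * φ' (l+1)) ∧
    |∑' l : ℕ, φ (l+1) * φ' (l+1)| ≤ E * E' * Tconst θ ∧
    ∀ n' : ℕ,
      |(∑ j ∈ Icc 1 n', ∑ l ∈ Icc 1 (j-1), φ (j-l) * φ' (j-l))
          - (n':ℝ) * ∑' l : ℕ, φ (l+1) * φ' (l+1)|
        ≤ (E * E' * ((1 + 1/((1+2*θ)-1)) * (1/(1-θ)))) * (n':ℝ) ^ ((1:ℝ)-θ) := by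
  have hq1' : (1:ℝ) < 1+2*θ := by linarith
  have hq2' : (1+2*θ:ℝ) < 2 := by linarith
  have habs : ∀ l : ℕ, |φ (l+1) * φ' (l+1)| ≤ (E*E') * ((l+1:ℕ):ℝ) ^ (-(1+2*θ)) := by
    intro l
    rw [abs_mul]
    have h1 := hφ (l+1) (by omega)
    have h2 := hφ' (l+1) (by omega)
    calc |φ (l+1)| * |φ' (l+1)|
        ≤ (E * ((l+1:ℕ):ℝ) ^ (-(1/2:ℝ)-θ)) * (E' * ((l+1:ℕ):ℝ) ^ (-(1/2:ℝ)-θ)) :=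
          mul_le_mul h1 h2 (abs_nonneg _) (by positivity)
    _ = (E*E') * (((l+1:ℕ):ℝ) ^ (-(1/2:ℝ)-θ) * ((l+1:ℕ):ℝ) ^ (-(1/2:ℝ)-θ)) := by ring
    _ = (E*E') * ((l+1:ℕ):ℝ) ^ (-(1+2*θ)) := by rw [rpow_half_mul (by omega)]
  have hmaj : Summable (fun l : ℕ => (E*E') * ((l+1:ℕ):ℝ) ^ (-(1+2*θ))) :=
    (Tconst_summable hθ0).mul_left _
  have hsumabs : Summable (fun l : ℕ => |φ (l+1) * φ' (l+1)|) :=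
    Summable.of_nonneg_of_le (fun l => abs_nonneg _) habs hmaj
  have hsum : Summable (fun l : ℕ => φ (l+1) * φ' (l+1)) := hsumabs.of_abs
  refine ⟨hsum, ?_, ?_⟩
  · calc |∑' l : ℕ, φ (l+1) * φ' (l+1)| ≤ ∑' l : ℕ, |φ (l+1) * φ' (l+1)| := by
          simpa only [Real.norm_eq_abs] using
            norm_tsum_le_tsum_norm (f := fun l : ℕ => φ (l+1) * φ' (l+1))
              (by simpa only [Real.norm_eq_abs] using hsumabs)
    _ ≤ ∑' l : ℕ, (E*E') * ((l+1:ℕ):ℝ) ^ (-(1+2*θ)) := Summable.tsum_le_tsum habs hsumabs hmaj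
    _ = E * E' * Tconst θ := tsum_mul_left
  · intro n'
    set T₂ : ℝ := ∑' l : ℕ, φ (l+1) * φ' (l+1) with hT₂
    -- bound on the tail defect for each j ≥ 1
    have hdefect : ∀ j : ℕ, 1 ≤ j →
        |(∑ l ∈ Icc 1 (j-1), φ (j-l) * φ' (j-l)) - T₂|
          ≤ (E*E'*(1 + 1/((1+2*θ)-1))) * (j:ℝ) ^ (-θ) := by
      intro j hj
      have hP : (∑ l ∈ Icc 1 (j-1), φ (j-l) * φ' (j-l))
          = ∑ i ∈ range (j-1), φ (i+1) * φ' (i+1) := by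
        refine Eq.trans ?_ (sum_Icc1_eq_range (fun m => φ m * φ' m) (j-1))
        exact sum_reflect (fun m => φ m * φ' m) j
      have htail : (∑ i ∈ range (j-1), φ (i+1) * φ' (i+1))
          + (∑' i : ℕ, φ ((i+(j-1))+1) * φ' ((i+(j-1))+1)) = T₂ :=
        Summable.sum_add_tsum_nat_add (j-1) hsum
      set tail : ℝ := ∑' i : ℕ, φ ((i+(j-1))+1) * φ' ((i+(j-1))+1) with htaildef
      have heq : (∑ l ∈ Icc 1 (j-1), φ (j-l) * φ' (j-l)) - T₂ = -tail := by
        rw [hP]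
        linarith [htail]
      rw [heq, abs_neg]
      have htailsummable : Summable (fun i : ℕ => |φ ((i+(j-1))+1) * φ' ((i+(j-1))+1)|) :=
        ((summable_nat_add_iff (f := fun l : ℕ => |φ (l+1) * φ' (l+1)|) (j-1)).2
          hsumabs).congr (fun i => rfl)
      have hcast : ∀ i : ℕ, (((i+(j-1))+1:ℕ):ℝ) = (j:ℝ) + (i:ℝ) := by
        intro i
        have h : (i+(j-1))+1 = j + i := by omega
        rw [h]
        push_cast
        ring
      have htb : ∀ i : ℕ, |φ ((i+(j-1))+1) * φ' ((i+(j-1))+1)|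
          ≤ (E*E') * ((j:ℝ)+(i:ℝ)) ^ (-(1+2*θ)) := by
        intro i
        have := habs (i+(j-1))
        rwa [hcast i] at this
      calc |tail| ≤ ∑' i : ℕ, |φ ((i+(j-1))+1) * φ' ((i+(j-1))+1)| := by
            simpa only [Real.norm_eq_abs] using
              norm_tsum_le_tsum_norm
                (f := fun i : ℕ => φ ((i+(j-1))+1) * φ' ((i+(j-1))+1))
                (by simpa only [Real.norm_eq_abs] using htailsummable)
      _ ≤ ∑' i : ℕ, (E*E') * ((j:ℝ)+(i:ℝ)) ^ (-(1+2*θ)) :=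
            Summable.tsum_le_tsum htb htailsummable ((tail_summable hq1' j).mul_left _)
      _ = (E*E') * ∑' i : ℕ, ((j:ℝ)+(i:ℝ)) ^ (-(1+2*θ)) := tsum_mul_left
      _ ≤ (E*E') * ((1 + 1/((1+2*θ)-1)) * (j:ℝ) ^ (1-(1+2*θ))) :=
            mul_le_mul_of_nonneg_left (tail_sum_le hq1' hq2' j hj) (mul_nonneg hE hE')
      _ ≤ (E*E'*(1 + 1/((1+2*θ)-1))) * (j:ℝ) ^ (-θ) := by
            rw [show (1-(1+2*θ)) = -(2*θ) by ring]
            have hj1 : (1:ℝ) ≤ (j:ℝ) := by exact_mod_cast hj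
            have := Real.rpow_le_rpow_of_exponent_le hj1 (show -(2*θ) ≤ -θ by linarith)
            nlinarith [Real.rpow_nonneg (show (0:ℝ) ≤ (j:ℝ) by positivity) (-θ),
              mul_nonneg (mul_nonneg hE hE')
                (show (0:ℝ) ≤ 1 + 1/((1+2*θ)-1) by
                  have := one_div_nonneg.2 (show (0:ℝ) ≤ (1+2*θ)-1 by linarith)
                  linarith)]
    -- assemble
    have h5 : (∑ j ∈ Icc 1 n', ∑ l ∈ Icc 1 (j-1), φ (j-l) * φ' (j-l)) - (n':ℝ) * T₂
        = ∑ j ∈ Icc 1 n', ((∑ l ∈ Icc 1 (j-1), φ (j-l) * φ' (j-l)) - T₂) := by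
      rw [Finset.sum_sub_distrib, Finset.sum_const, Nat.card_Icc, Nat.add_sub_cancel,
        nsmul_eq_mul]
    rw [h5]
    calc |∑ j ∈ Icc 1 n', ((∑ l ∈ Icc 1 (j-1), φ (j-l) * φ' (j-l)) - T₂)|
        ≤ ∑ j ∈ Icc 1 n', |(∑ l ∈ Icc 1 (j-1), φ (j-l) * φ' (j-l)) - T₂| :=
          Finset.abs_sum_le_sum_abs _ _
    _ ≤ ∑ j ∈ Icc 1 n', (E*E'*(1 + 1/((1+2*θ)-1))) * (j:ℝ) ^ (-θ) := by
          apply Finset.sum_le_sum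
          intro j hjm
          exact hdefect j (Finset.mem_Icc.1 hjm).1
    _ = (E*E'*(1 + 1/((1+2*θ)-1))) * ∑ j ∈ Icc 1 n', (j:ℝ) ^ (-θ) := by
          rw [Finset.mul_sum]
    _ ≤ (E*E'*(1 + 1/((1+2*θ)-1))) * ((1/(1-θ)) * (n':ℝ) ^ (1-θ)) := by
          have h7 : (0:ℝ) ≤ 1 + 1/((1+2*θ)-1) := by
            have := one_div_nonneg.2 (show (0:ℝ) ≤ (1+2*θ)-1 by linarith)
            linarith
          exact mul_le_mul_of_nonneg_left (partial_sum_le hθ0 (by linarith) n')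
            (mul_nonneg (mul_nonneg hE hE') h7)
    _ = (E * E' * ((1 + 1/((1+2*θ)-1)) * (1/(1-θ)))) * (n':ℝ) ^ ((1:ℝ)-θ) := by ring
set_option maxHeartbeats 1000000 in
theorem stmt17' (σ2 γ : ℝ)
    (d : ℕ → ℕ) (c : ℕ → ℕ → ℕ → ℝ) (θ : ℝ) (hθ0 : 0 < θ) (hθ : θ < 1 / 2)
    (hA : ∃ C₀ > (0 : ℝ), ∀ n j : ℕ, ∀ ν < d n,
      (c n ν j) ^ 2 ≤ C₀ * ((max j 1 : ℕ) : ℝ) ^ (-(3 / 2 : ℝ) - θ))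
    (v w v' w' : ℕ → ℕ → ℝ) (Kv Kw Kv' Kw' : ℝ)
    (hv : ∀ n, ∑ ν ∈ Finset.range (d n), |v n ν| ≤ Kv)
    (hw : ∀ n, ∑ ν ∈ Finset.range (d n), |w n ν| ≤ Kw)
    (hv' : ∀ n, ∑ ν ∈ Finset.range (d n), |v' n ν| ≤ Kv')
    (hw' : ∀ n, ∑ ν ∈ Finset.range (d n), |w' n ν| ≤ Kw') :
    (∀ n, Summable (fun l : ℕ => (ftil d c n (v n) (w n) (l + 1) 0) ^ 2)) ∧
    (∀ n, Summable (fun l : ℕ =>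
      ftil d c n (v n) (w n) (l + 1) 0 * ftil d c n (v' n) (w' n) (l + 1) 0)) ∧
    (∃ K : ℝ, ∀ n,
      |(γ - σ2 ^ 2) * (ftil d c n (v n) (w n) 0 0) ^ 2 +
          σ2 ^ 2 * ∑' l : ℕ, (ftil d c n (v n) (w n) (l + 1) 0) ^ 2| ≤ K ∧
      |(γ - σ2 ^ 2) * (ftil d c n (v n) (w n) 0 0) * (ftil d c n (v' n) (w' n) 0 0) +
          σ2 ^ 2 * ∑' l : ℕ,
            ftil d c n (v n) (w n) (l + 1) 0 * ftil d c n (v' n) (w' n) (l + 1) 0| ≤ K) ∧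
    (∃ C : ℝ, ∀ n n' : ℕ,
      |(ftil d c n (v n) (w n) 0 0) ^ 2 * ((n' : ℝ) * (γ - σ2 ^ 2)) +
          σ2 ^ 2 * (∑ j ∈ Finset.Icc 1 n', ∑ l ∈ Finset.Icc 1 (j - 1),
            (ftil d c n (v n) (w n) (j - l) 0) ^ 2) -
          (n' : ℝ) * ((γ - σ2 ^ 2) * (ftil d c n (v n) (w n) 0 0) ^ 2 +
            σ2 ^ 2 * ∑' l : ℕ, (ftil d c n (v n) (w n) (l + 1) 0) ^ 2)|
        ≤ C * (n' : ℝ) ^ ((1 : ℝ) - θ) ∧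
      |(ftil d c n (v n) (w n) 0 0) * (ftil d c n (v' n) (w' n) 0 0) *
            ((n' : ℝ) * (γ - σ2 ^ 2)) +
          σ2 ^ 2 * (∑ j ∈ Finset.Icc 1 n', ∑ l ∈ Finset.Icc 1 (j - 1),
            ftil d c n (v n) (w n) (j - l) 0 * ftil d c n (v' n) (w' n) (j - l) 0) -
          (n' : ℝ) * ((γ - σ2 ^ 2) * (ftil d c n (v n) (w n) 0 0) *
              (ftil d c n (v' n) (w' n) 0 0) +
            σ2 ^ 2 * ∑' l : ℕ,
              ftil d c n (v n) (w n) (l + 1) 0 * ftil d c n (v' n) (w' n) (l + 1) 0)|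
        ≤ C * (n' : ℝ) ^ ((1 : ℝ) - θ)) := by
  obtain ⟨C₀, hC₀pos, hC₀⟩ := hA
  set B : ℝ := Real.sqrt C₀ with hBdef
  have hB0 : 0 ≤ B := Real.sqrt_nonneg _
  have hc : ∀ n j ν, ν < d n → |c n ν j| ≤ B * gq θ j := by
    intro n j ν hν
    have h := hC₀ n j ν hν
    have hBg : (B * gq θ j)^2 = C₀ * ((max j 1 : ℕ):ℝ) ^ (-(3/2:ℝ) - θ) := by
      rw [mul_pow, hBdef, Real.sq_sqrt hC₀pos.le, sq, gq_mul_self θ j]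
      congr 1
      congr 1
      ring
    have h2 : (c n ν j)^2 ≤ (B * gq θ j)^2 := by rw [hBg]; exact h
    calc |c n ν j| = Real.sqrt ((c n ν j)^2) := (Real.sqrt_sq_eq_abs _).symm
    _ ≤ Real.sqrt ((B * gq θ j)^2) := Real.sqrt_le_sqrt h2
    _ = B * gq θ j := Real.sqrt_sq (mul_nonneg hB0 (gq_nonneg θ j))
  have hKv0 : 0 ≤ Kv := le_trans (Finset.sum_nonneg fun ν _ => abs_nonneg _) (hv 0)
  have hKw0 : 0 ≤ Kw := le_trans (Finset.sum_nonneg fun ν _ => abs_nonneg _) (hw 0)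
  have hKv'0 : 0 ≤ Kv' := le_trans (Finset.sum_nonneg fun ν _ => abs_nonneg _) (hv' 0)
  have hKw'0 : 0 ≤ Kw' := le_trans (Finset.sum_nonneg fun ν _ => abs_nonneg _) (hw' 0)
  set E1 : ℝ := 2*Kv*Kw*B^2 * Cgc θ with hE1def
  set E2 : ℝ := 2*Kv'*Kw'*B^2 * Cgc θ with hE2def
  set F1 : ℝ := 2*Kv*Kw*B^2 * S0c θ with hF1def
  set F2 : ℝ := 2*Kv'*Kw'*B^2 * S0c θ with hF2def
  have hE10 : 0 ≤ E1 := by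
    rw [hE1def]; exact mul_nonneg (by positivity) (Cgc_nonneg hθ0 hθ)
  have hE20 : 0 ≤ E2 := by
    rw [hE2def]; exact mul_nonneg (by positivity) (Cgc_nonneg hθ0 hθ)
  have hF10 : 0 ≤ F1 := by
    rw [hF1def]; exact mul_nonneg (by positivity) (S0c_nonneg θ)
  have hF20 : 0 ≤ F2 := by
    rw [hF2def]; exact mul_nonneg (by positivity) (S0c_nonneg θ)
  have hb1 := fun n => ftil_bounds d c n hθ0 hθ hB0 (hc n) (v n) (w n) (hv n) (hw n)
  have hb2 := fun n => ftil_bounds d c n hθ0 hθ hB0 (hc n) (v' n) (w' n) (hv' n) (hw' n)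
  have hp11 := fun n => pair_bound hθ0 hθ hE10 hE10
    (fun l => ftil d c n (v n) (w n) l 0) (fun l => ftil d c n (v n) (w n) l 0)
    ((hb1 n).2) ((hb1 n).2)
  have hp12 := fun n => pair_bound hθ0 hθ hE10 hE20
    (fun l => ftil d c n (v n) (w n) l 0) (fun l => ftil d c n (v' n) (w' n) l 0)
    ((hb1 n).2) ((hb2 n).2)
  have hts : ∀ n, (∑' l : ℕ, (ftil d c n (v n) (w n) (l + 1) 0) ^ 2)
      = ∑' l : ℕ, ftil d c n (v n) (w n) (l + 1) 0 * ftil d c n (v n) (w n) (l + 1) 0 :=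
    fun n => tsum_congr fun l => pow_two _
  refine ⟨?_, ?_, ?_, ?_⟩
  · intro n
    exact ((hp11 n).1).congr fun l => (pow_two _).symm
  · intro n
    exact (hp12 n).1
  · refine ⟨|γ - σ2^2| * F1^2 + σ2^2 * (E1*E1*Tconst θ)
      + (|γ - σ2^2| * (F1*F2) + σ2^2 * (E1*E2*Tconst θ)), fun n => ⟨?_, ?_⟩⟩
    · have hA1 : |ftil d c n (v n) (w n) 0 0| ≤ F1 := (hb1 n).1 0
      have ht1 : |∑' l : ℕ, ftil d c n (v n) (w n) (l + 1) 0 * ftil d c n (v n) (w n) (l + 1) 0|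
          ≤ E1 * E1 * Tconst θ := (hp11 n).2.1
      have hnn : 0 ≤ |γ - σ2^2| * (F1*F2) + σ2^2 * (E1*E2*Tconst θ) := by
        have := Tconst_nonneg θ
        positivity
      calc |(γ - σ2 ^ 2) * (ftil d c n (v n) (w n) 0 0) ^ 2 +
          σ2 ^ 2 * ∑' l : ℕ, (ftil d c n (v n) (w n) (l + 1) 0) ^ 2|
          ≤ |(γ - σ2 ^ 2) * (ftil d c n (v n) (w n) 0 0) ^ 2| +
            |σ2 ^ 2 * ∑' l : ℕ, (ftil d c n (v n) (w n) (l + 1) 0) ^ 2| := abs_add_le _ _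
      _ = |γ - σ2^2| * |ftil d c n (v n) (w n) 0 0|^2 +
            σ2^2 * |∑' l : ℕ, (ftil d c n (v n) (w n) (l + 1) 0) ^ 2| := by
            rw [abs_mul, abs_mul, abs_pow, abs_of_nonneg (sq_nonneg σ2)]
      _ ≤ |γ - σ2^2| * F1^2 + σ2^2 * (E1*E1*Tconst θ) := by
            apply add_le_add
            · exact mul_le_mul_of_nonneg_left
                (pow_le_pow_left₀ (abs_nonneg _) hA1 2) (abs_nonneg _)
            · apply mul_le_mul_of_nonneg_left _ (sq_nonneg σ2)
              rw [hts n]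
              exact ht1
      _ ≤ _ := by linarith
    · have hA1 : |ftil d c n (v n) (w n) 0 0| ≤ F1 := (hb1 n).1 0
      have hA2 : |ftil d c n (v' n) (w' n) 0 0| ≤ F2 := (hb2 n).1 0
      have ht2 := (hp12 n).2.1
      have hnn : 0 ≤ |γ - σ2^2| * F1^2 + σ2^2 * (E1*E1*Tconst θ) := by
        have := Tconst_nonneg θ
        positivity
      calc |(γ - σ2 ^ 2) * ftil d c n (v n) (w n) 0 0 * ftil d c n (v' n) (w' n) 0 0 +
          σ2 ^ 2 * ∑' l : ℕ,
            ftil d c n (v n) (w n) (l + 1) 0 * ftil d c n (v' n) (w' n) (l + 1) 0|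
          ≤ |(γ - σ2 ^ 2) * ftil d c n (v n) (w n) 0 0 * ftil d c n (v' n) (w' n) 0 0| +
            |σ2 ^ 2 * ∑' l : ℕ,
              ftil d c n (v n) (w n) (l + 1) 0 * ftil d c n (v' n) (w' n) (l + 1) 0| :=
            abs_add_le _ _
      _ = |γ - σ2^2| * |ftil d c n (v n) (w n) 0 0| * |ftil d c n (v' n) (w' n) 0 0| +
            σ2^2 * |∑' l : ℕ,
              ftil d c n (v n) (w n) (l + 1) 0 * ftil d c n (v' n) (w' n) (l + 1) 0| := by
            rw [abs_mul, abs_mul, abs_mul, abs_of_nonneg (sq_nonneg σ2)]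
      _ ≤ |γ - σ2^2| * (F1*F2) + σ2^2 * (E1*E2*Tconst θ) := by
            apply add_le_add
            · rw [mul_assoc]
              exact mul_le_mul_of_nonneg_left
                (mul_le_mul hA1 hA2 (abs_nonneg _) hF10) (abs_nonneg _)
            · exact mul_le_mul_of_nonneg_left ht2 (sq_nonneg σ2)
      _ ≤ _ := by linarith
  · set cθ : ℝ := (1 + 1/((1+2*θ)-1)) * (1/(1-θ)) with hcθdef
    have hcθ0 : 0 ≤ cθ := by
      rw [hcθdef]
      have h1 := one_div_nonneg.2 (show (0:ℝ) ≤ (1+2*θ)-1 by linarith)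
      have h2 := one_div_nonneg.2 (show (0:ℝ) ≤ 1-θ by linarith)
      nlinarith
    refine ⟨σ2^2 * (E1*E1*cθ) + σ2^2 * (E1*E2*cθ), fun n n' => ⟨?_, ?_⟩⟩
    · have h := (hp11 n).2.2 n'
      have hSS : (∑ j ∈ Finset.Icc 1 n', ∑ l ∈ Finset.Icc 1 (j - 1),
            (ftil d c n (v n) (w n) (j - l) 0) ^ 2)
          = ∑ j ∈ Finset.Icc 1 n', ∑ l ∈ Finset.Icc 1 (j - 1),
            ftil d c n (v n) (w n) (j - l) 0 * ftil d c n (v n) (w n) (j - l) 0 :=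
        Finset.sum_congr rfl fun j _ => Finset.sum_congr rfl fun l _ => pow_two _
      have hrw : (ftil d c n (v n) (w n) 0 0) ^ 2 * ((n' : ℝ) * (γ - σ2 ^ 2)) +
          σ2 ^ 2 * (∑ j ∈ Finset.Icc 1 n', ∑ l ∈ Finset.Icc 1 (j - 1),
            (ftil d c n (v n) (w n) (j - l) 0) ^ 2) -
          (n' : ℝ) * ((γ - σ2 ^ 2) * (ftil d c n (v n) (w n) 0 0) ^ 2 +
            σ2 ^ 2 * ∑' l : ℕ, (ftil d c n (v n) (w n) (l + 1) 0) ^ 2)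
          = σ2^2 * ((∑ j ∈ Finset.Icc 1 n', ∑ l ∈ Finset.Icc 1 (j - 1),
              ftil d c n (v n) (w n) (j - l) 0 * ftil d c n (v n) (w n) (j - l) 0) -
            (n' : ℝ) * ∑' l : ℕ,
              ftil d c n (v n) (w n) (l + 1) 0 * ftil d c n (v n) (w n) (l + 1) 0) := by
        rw [hSS, hts n]
        ring
      rw [hrw, abs_mul, abs_of_nonneg (sq_nonneg σ2)]
      have hx0 : (0:ℝ) ≤ (n':ℝ) ^ ((1:ℝ)-θ) := Real.rpow_nonneg (by positivity) _
      calc σ2^2 * |_| ≤ σ2^2 * ((E1*E1*cθ) * (n':ℝ) ^ ((1:ℝ)-θ)) :=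
            mul_le_mul_of_nonneg_left h (sq_nonneg σ2)
      _ ≤ (σ2^2 * (E1*E1*cθ) + σ2^2 * (E1*E2*cθ)) * (n':ℝ) ^ ((1:ℝ)-θ) := by
            have hnn : 0 ≤ σ2^2 * (E1*E2*cθ) * (n':ℝ) ^ ((1:ℝ)-θ) := by
              apply mul_nonneg (mul_nonneg (sq_nonneg σ2)
                (mul_nonneg (mul_nonneg hE10 hE20) hcθ0)) hx0
            nlinarith
    · have h := (hp12 n).2.2 n'
      have hrw : (ftil d c n (v n) (w n) 0 0) * (ftil d c n (v' n) (w' n) 0 0) *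
            ((n' : ℝ) * (γ - σ2 ^ 2)) +
          σ2 ^ 2 * (∑ j ∈ Finset.Icc 1 n', ∑ l ∈ Finset.Icc 1 (j - 1),
            ftil d c n (v n) (w n) (j - l) 0 * ftil d c n (v' n) (w' n) (j - l) 0) -
          (n' : ℝ) * ((γ - σ2 ^ 2) * (ftil d c n (v n) (w n) 0 0) *
              (ftil d c n (v' n) (w' n) 0 0) +
            σ2 ^ 2 * ∑' l : ℕ,
              ftil d c n (v n) (w n) (l + 1) 0 * ftil d c n (v' n) (w' n) (l + 1) 0)
          = σ2^2 * ((∑ j ∈ Finset.Icc 1 n', ∑ l ∈ Finset.Icc 1 (j - 1),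
              ftil d c n (v n) (w n) (j - l) 0 * ftil d c n (v' n) (w' n) (j - l) 0) -
            (n' : ℝ) * ∑' l : ℕ,
              ftil d c n (v n) (w n) (l + 1) 0 * ftil d c n (v' n) (w' n) (l + 1) 0) := by
        ring
      rw [hrw, abs_mul, abs_of_nonneg (sq_nonneg σ2)]
      have hx0 : (0:ℝ) ≤ (n':ℝ) ^ ((1:ℝ)-θ) := Real.rpow_nonneg (by positivity) _
      calc σ2^2 * |_| ≤ σ2^2 * ((E1*E2*cθ) * (n':ℝ) ^ ((1:ℝ)-θ)) :=
            mul_le_mul_of_nonneg_left h (sq_nonneg σ2)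
      _ ≤ (σ2^2 * (E1*E1*cθ) + σ2^2 * (E1*E2*cθ)) * (n':ℝ) ^ ((1:ℝ)-θ) := by
            have hnn : 0 ≤ σ2^2 * (E1*E1*cθ) * (n':ℝ) ^ ((1:ℝ)-θ) := by
              apply mul_nonneg (mul_nonneg (sq_nonneg σ2)
                (mul_nonneg (mul_nonneg hE10 hE10) hcθ0)) hx0
            nlinarith

end Aux

/-- explicit asymptotic variance and covariance parameters under stationary
innovation moments `σ_k² = σ²`, `γ_k = γ`: the defining series converge, are bounded
uniformly in `n`, and satisfy the approximation bounds (Ass4) and (Ass5). -/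
theorem stmt17 {Ω : Type*} [MeasureSpace Ω] [IsProbabilityMeasure (ℙ : Measure Ω)]
    (ε : ℤ → Ω → ℝ) (hmeas : ∀ k, Measurable (ε k))
    (hindep : ProbabilityTheory.iIndepFun ε ℙ)
    (hmean : ∀ k, ∫ ω, ε k ω = 0)
    (δ : ℝ) (hδ : 0 < δ) (M : ℝ)
    (hmom : ∀ k, ∫ ω, |ε k ω| ^ ((4 : ℝ) + δ) ≤ M)
    (hLp : ∀ k, MemLp (ε k) (ENNReal.ofReal (4 + δ)))
    -- stationarity of the moments up to order four:
    (σ2 γ : ℝ) (hvar : ∀ k, ∫ ω, (ε k ω) ^ 2 = σ2) (hkurt : ∀ k, ∫ ω, (ε k ω) ^ 4 = γ)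
    (d : ℕ → ℕ) (c : ℕ → ℕ → ℕ → ℝ) (θ : ℝ) (hθ0 : 0 < θ) (hθ : θ < 1 / 2)
    (hA : AssumptionA d c θ) (v w v' w' : ℕ → ℕ → ℝ) (Kv Kw Kv' Kw' : ℝ)
    (hv : ∀ n, ∑ ν ∈ Finset.range (d n), |v n ν| ≤ Kv)
    (hw : ∀ n, ∑ ν ∈ Finset.range (d n), |w n ν| ≤ Kw)
    (hv' : ∀ n, ∑ ν ∈ Finset.range (d n), |v' n ν| ≤ Kv')
    (hw' : ∀ n, ∑ ν ∈ Finset.range (d n), |w' n ν| ≤ Kw') :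
    -- the defining series converge
    (∀ n, Summable (fun l : ℕ => (ftil d c n (v n) (w n) (l + 1) 0) ^ 2)) ∧
    (∀ n, Summable (fun l : ℕ =>
      ftil d c n (v n) (w n) (l + 1) 0 * ftil d c n (v' n) (w' n) (l + 1) 0)) ∧
    -- uniform boundedness in `n` of `α_n²` and `β_n`
    (∃ K : ℝ, ∀ n,
      |(γ - σ2 ^ 2) * (ftil d c n (v n) (w n) 0 0) ^ 2 +
          σ2 ^ 2 * ∑' l : ℕ, (ftil d c n (v n) (w n) (l + 1) 0) ^ 2| ≤ K ∧
      |(γ - σ2 ^ 2) * (ftil d c n (v n) (w n) 0 0) * (ftil d c n (v' n) (w' n) 0 0) +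
          σ2 ^ 2 * ∑' l : ℕ,
            ftil d c n (v n) (w n) (l + 1) 0 * ftil d c n (v' n) (w' n) (l + 1) 0| ≤ K) ∧
    -- the approximation bounds (Ass4) and (Ass5) hold with these choices
    (∃ C : ℝ, ∀ n n' : ℕ,
      |(ftil d c n (v n) (w n) 0 0) ^ 2 * ((n' : ℝ) * (γ - σ2 ^ 2)) +
          σ2 ^ 2 * (∑ j ∈ Finset.Icc 1 n', ∑ l ∈ Finset.Icc 1 (j - 1),
            (ftil d c n (v n) (w n) (j - l) 0) ^ 2) -
          (n' : ℝ) * ((γ - σ2 ^ 2) * (ftil d c n (v n) (w n) 0 0) ^ 2 +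
            σ2 ^ 2 * ∑' l : ℕ, (ftil d c n (v n) (w n) (l + 1) 0) ^ 2)|
        ≤ C * (n' : ℝ) ^ ((1 : ℝ) - θ) ∧
      |(ftil d c n (v n) (w n) 0 0) * (ftil d c n (v' n) (w' n) 0 0) *
            ((n' : ℝ) * (γ - σ2 ^ 2)) +
          σ2 ^ 2 * (∑ j ∈ Finset.Icc 1 n', ∑ l ∈ Finset.Icc 1 (j - 1),
            ftil d c n (v n) (w n) (j - l) 0 * ftil d c n (v' n) (w' n) (j - l) 0) -
          (n' : ℝ) * ((γ - σ2 ^ 2) * (ftil d c n (v n) (w n) 0 0) *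
              (ftil d c n (v' n) (w' n) 0 0) +
            σ2 ^ 2 * ∑' l : ℕ,
              ftil d c n (v n) (w n) (l + 1) 0 * ftil d c n (v' n) (w' n) (l + 1) 0)|
        ≤ C * (n' : ℝ) ^ ((1 : ℝ) - θ)) := by
  exact stmt17' σ2 γ d c θ hθ0 hθ hA v w v' w' Kv Kw Kv' Kw' hv hw hv' hw'

end
end
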